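/- arXiv:1208.4479 — 6 statements merged into one kernel-verified Lean document; each statement's English description precedes it below -/
import Mathlib

section
/- Let Y be a real Banach space and let D ⊆ Y be an open star-shaped set. If, for some δ > 0, the set (ck D)^{−δ} is nonempty, then the shrunken set D^{−δ} is star-shaped. -/
/-- The convex kernel of a set `S`: the set of points of `S` with respect to which `S`
is star-shaped. -/
def convexKernel {Y : Type*} [NormedAddCommGroup Y] [NormedSpace ℝ Y] (S : Set Y) : Set Y :=
  {x ∈ S | StarConvex ℝ x S}

/-- The `δ`-shrinking `S^{-δ} = {x ∈ S : dist(x, ∂S) > δ}` of a set `S`. -/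
def shrink {Y : Type*} [NormedAddCommGroup Y] [NormedSpace ℝ Y] (S : Set Y) (δ : ℝ) : Set Y :=
  {x ∈ S | δ < Metric.infDist x (frontier S)}

/-- A ball around a point of `S` disjoint from the frontier of `S` is contained in `S`. -/
lemma ball_subset_of_disjoint_frontier {Y : Type*} [NormedAddCommGroup Y] [NormedSpace ℝ Y]
    {S : Set Y} {x : Y} {r : ℝ} (hx : x ∈ S) (hr : 0 < r)
    (h : Disjoint (Metric.ball x r) (frontier S)) :
    Metric.ball x r ⊆ S := by
  have hconn : IsPreconnected (Metric.ball x r) := (convex_ball x r).isPreconnected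
  have hcover : Metric.ball x r ⊆ interior S ∪ (closure S)ᶜ := by
    intro p hp
    by_cases h1 : p ∈ closure S
    · left
      by_contra h2
      exact (h.ne_of_mem hp ⟨h1, h2⟩) rfl
    · exact Or.inr h1
  have hdisj : Disjoint (interior S) (closure S)ᶜ :=
    Set.disjoint_compl_right_iff_subset.mpr interior_subset_closure
  have hxint : x ∈ interior S := by
    by_contra h2
    exact (h.ne_of_mem (Metric.mem_ball_self hr) ⟨subset_closure hx, h2⟩) rfl
  have := hconn.subset_left_of_subset_union isOpen_interior isClosed_closure.isOpen_compl
    hdisj hcover ⟨x, Metric.mem_ball_self hr, hxint⟩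
  exact this.trans interior_subset

lemma ball_infDist_frontier_subset {Y : Type*} [NormedAddCommGroup Y] [NormedSpace ℝ Y]
    {S : Set Y} {x : Y} (hx : x ∈ S) (hr : 0 < Metric.infDist x (frontier S)) :
    Metric.ball x (Metric.infDist x (frontier S)) ⊆ S :=
  ball_subset_of_disjoint_frontier hx hr Metric.disjoint_ball_infDist

/-- If `D` is an open star-shaped subset of a real Banach space and `(ck D)^{-δ}` is
nonempty, then `D^{-δ}` is star-shaped. -/
theorem stmt0 {Y : Type*} [NormedAddCommGroup Y] [NormedSpace ℝ Y] [CompleteSpace Y]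
    (D : Set Y) (hD : IsOpen D) (hstar : (convexKernel D).Nonempty)
    (δ : ℝ) (hδ : 0 < δ) (hne : (shrink (convexKernel D) δ).Nonempty) :
    ∃ x ∈ shrink D δ, StarConvex ℝ x (shrink D δ) := by
  obtain ⟨x, hxK, hxd⟩ := hne
  have hKD : convexKernel D ⊆ D := fun p hp => hp.1
  have hR0 : 0 < Metric.infDist x (frontier (convexKernel D)) := hδ.trans hxd
  have hballx : Metric.ball x (Metric.infDist x (frontier (convexKernel D))) ⊆ convexKernel D :=
    ball_infDist_frontier_subset hxK hR0
  -- frontier D is nonempty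
  have hfr : (frontier D).Nonempty := by
    by_contra hfre
    rw [Set.not_nonempty_iff_eq_empty] at hfre
    have hclosed : IsClosed D :=
      frontier_subset_iff_isClosed.mp (by rw [hfre]; exact Set.empty_subset _)
    haveI : PreconnectedSpace Y :=
      ⟨(convex_univ : Convex ℝ (Set.univ : Set Y)).isPreconnected⟩
    have hDuniv : D = Set.univ := IsClopen.eq_univ ⟨hclosed, hD⟩ ⟨x, hKD hxK⟩
    have hKuniv : convexKernel D = Set.univ := by
      rw [hDuniv]
      ext p
      simp [convexKernel, starConvex_univ]
    rw [hKuniv, frontier_univ, Metric.infDist_empty] at hxd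
    linarith
  -- key: a ball of radius > δ inside D forces membership in shrink D δ
  have key : ∀ (z : Y) (r : ℝ), δ < r → Metric.ball z r ⊆ D → z ∈ shrink D δ := by
    intro z r hδr hball
    have hr0 : 0 < r := hδ.trans hδr
    have hzD : z ∈ D := hball (Metric.mem_ball_self hr0)
    refine ⟨hzD, lt_of_lt_of_le hδr ?_⟩
    by_contra hlt
    push_neg at hlt
    obtain ⟨p, hpf, hpd⟩ := (Metric.infDist_lt_iff hfr).mp hlt
    have hpD : p ∈ D := hball (by simpa [Metric.mem_ball, dist_comm] using hpd)
    exact hpf.2 (by rwa [hD.interior_eq])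
  have hxshrink : x ∈ shrink D δ :=
    key x _ hxd (hballx.trans hKD)
  refine ⟨x, hxshrink, ?_⟩
  intro y hy a b ha hb hab
  obtain ⟨hyD, hyd⟩ := hy
  have hry0 : 0 < Metric.infDist y (frontier D) := hδ.trans hyd
  have hbally : Metric.ball y (Metric.infDist y (frontier D)) ⊆ D :=
    ball_infDist_frontier_subset hyD hry0
  set r := min (Metric.infDist x (frontier (convexKernel D))) (Metric.infDist y (frontier D))
    with hrdef
  have hδr : δ < r := lt_min hxd hyd
  apply key _ r hδr
  intro p hp
  set w := p - (a • x + b • y) with hwdef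
  have hwnorm : ‖w‖ < r := by
    rw [Metric.mem_ball, dist_eq_norm] at hp
    exact hp
  have hxw : x + w ∈ convexKernel D := by
    apply hballx
    rw [Metric.mem_ball, dist_eq_norm]
    simpa using lt_of_lt_of_le hwnorm (min_le_left _ _)
  have hyw : y + w ∈ D := by
    apply hbally
    rw [Metric.mem_ball, dist_eq_norm]
    simpa using lt_of_lt_of_le hwnorm (min_le_right _ _)
  have hmem : a • (x + w) + b • (y + w) ∈ D := hxw.2 hyw ha hb hab
  have heq : a • (x + w) + b • (y + w) = p := by
    have h1 : a • (x + w) + b • (y + w) = (a • x + b • y) + (a + b) • w := by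
      rw [smul_add, smul_add, add_smul]; abel
    rw [h1, hab, one_smul, hwdef]
    abel
  rwa [heq] at hmem
end

section
/- Let X be a normed vector space, let M, r, η > 0 be real numbers, let p, n be integers with 1 ≤ p < n, set h₀ = r/(2·e·η·M), and let h > 0 satisfy n ≤ h₀/h. Suppose vectors v_{p+1}, …, v_n ∈ X satisfy ‖v_j‖ ≤ (ln 2)·η·M·(2ηMj/r)^{j−1} for j = p+1, …, n. Then ‖Σ_{j=p}^{n−1} h^j · v_{j+1}‖ ≤ (ln 2)·η·M·(2ηMh/r)^p · e^{p+1} · p!. In particular, ‖Σ_{j=p}^{n−1} h^j v_{j+1}‖ ≤ c(η,p) · r^{−p} · M^{p+1} · h^p with c(η,p) = (ln 2)·η·(2η)^p·e^{p+1}·p!. -/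
open MeasureTheory Set


private lemma aux_sum (p m : ℕ) (hp : 1 ≤ p) :
    ∑ k ∈ Finset.range m, ((p : ℝ) + 1 + k) ^ p * Real.exp (-(k : ℝ)) ≤
      Real.exp 1 ^ (p + 1) * (Nat.factorial p : ℝ) := by
  set g : ℝ → ℝ := fun x => ((p : ℝ) + 1 + x) ^ p * Real.exp (-x) with hg
  have hpR : (1 : ℝ) ≤ (p : ℝ) := by exact_mod_cast hp
  have hanti : AntitoneOn g (Set.Icc (-1 : ℝ) (-1 + m)) := by
    intro x hx y hy hxy
    have hx1 : (-1 : ℝ) ≤ x := hx.1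
    have hy1 : (-1 : ℝ) ≤ y := hy.1
    have hbx : (0 : ℝ) ≤ (p : ℝ) + 1 + x := by linarith
    have hby : (0 : ℝ) ≤ (p : ℝ) + 1 + y := by linarith
    have hppos : (0 : ℝ) < (p : ℝ) := by linarith
    set t : ℝ := (y - x) / p with ht
    have ht0 : 0 ≤ t := by
      apply div_nonneg (by linarith) (by linarith)
    have hpt : (p : ℝ) * t = y - x := by rw [ht]; field_simp [hppos.ne']
    have key : (p : ℝ) + 1 + y ≤ ((p : ℝ) + 1 + x) * Real.exp t := by
      nlinarith [mul_le_mul_of_nonneg_left (Real.add_one_le_exp t) hbx, hpt,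
        mul_nonneg (by linarith : (0:ℝ) ≤ 1 + x) ht0]
    have hpow : ((p : ℝ) + 1 + y) ^ p ≤ ((p : ℝ) + 1 + x) ^ p * Real.exp (y - x) := by
      calc ((p : ℝ) + 1 + y) ^ p ≤ (((p : ℝ) + 1 + x) * Real.exp t) ^ p :=
            pow_le_pow_left₀ hby key p
        _ = ((p : ℝ) + 1 + x) ^ p * Real.exp t ^ p := mul_pow _ _ _
        _ = ((p : ℝ) + 1 + x) ^ p * Real.exp (y - x) := by
            rw [← Real.exp_nat_mul, hpt]
    have hexp : Real.exp (y - x) * Real.exp (-y) = Real.exp (-x) := by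
      rw [← Real.exp_add]; ring_nf
    simp only [hg]
    calc ((p : ℝ) + 1 + y) ^ p * Real.exp (-y)
        ≤ ((p : ℝ) + 1 + x) ^ p * Real.exp (y - x) * Real.exp (-y) :=
          mul_le_mul_of_nonneg_right hpow (Real.exp_nonneg _)
      _ = ((p : ℝ) + 1 + x) ^ p * Real.exp (-x) := by rw [mul_assoc, hexp]
  have hsum := hanti.sum_le_integral
  have hLHS : ∑ k ∈ Finset.range m, ((p : ℝ) + 1 + k) ^ p * Real.exp (-(k : ℝ)) =
      ∑ i ∈ Finset.range m, g (-1 + ((i + 1 : ℕ) : ℝ)) := by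
    refine Finset.sum_congr rfl fun i _ => ?_
    simp only [hg]
    push_cast
    ring_nf
  -- the integrand as a shifted Gamma integrand
  set F : ℝ → ℝ := fun y => y ^ p * Real.exp (-y) with hF
  have hgF : ∀ x : ℝ, g x = Real.exp ((p : ℝ) + 1) * F (x + ((p : ℝ) + 1)) := by
    intro x
    simp only [hg, hF]
    rw [show Real.exp ((p:ℝ)+1) * ((x + ((p:ℝ)+1)) ^ p * Real.exp (-(x + ((p:ℝ)+1)))) =
        (x + ((p:ℝ)+1)) ^ p * (Real.exp ((p:ℝ)+1) * Real.exp (-(x + ((p:ℝ)+1)))) from by ring,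
      ← Real.exp_add]
    ring_nf
  have hint_eq : (∫ x in (-1 : ℝ)..(-1 + m), g x) =
      Real.exp ((p : ℝ) + 1) * ∫ y in ((p : ℝ))..((p : ℝ) + m), F y := by
    simp_rw [hgF]
    rw [intervalIntegral.integral_const_mul, intervalIntegral.integral_comp_add_right F,
      show (-1 : ℝ) + ((p:ℝ)+1) = (p:ℝ) by ring,
      show (-1 : ℝ) + (m:ℝ) + ((p:ℝ)+1) = (p:ℝ) + m by ring]
  have hIntOn : IntegrableOn F (Set.Ioi (0 : ℝ)) := by
    have hconv := Real.GammaIntegral_convergent (s := (p : ℝ) + 1) (by positivity)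
    refine hconv.congr_fun (fun x hx => ?_) measurableSet_Ioi
    simp only [hF, add_sub_cancel_right]
    rw [Real.rpow_natCast]
    ring
  have hval : (∫ y in Set.Ioi (0 : ℝ), F y) = (Nat.factorial p : ℝ) := by
    have h1 : (∫ y in Set.Ioi (0 : ℝ), F y) =
        ∫ x in Set.Ioi (0 : ℝ), Real.exp (-x) * x ^ (((p : ℝ) + 1) - 1) := by
      refine setIntegral_congr_fun measurableSet_Ioi fun x hx => ?_
      simp only [hF, add_sub_cancel_right]
      rw [Real.rpow_natCast]
      ring
    rw [h1, ← Real.Gamma_eq_integral (by positivity), Real.Gamma_nat_eq_factorial]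
  have hle : (∫ y in ((p : ℝ))..((p : ℝ) + m), F y) ≤ (Nat.factorial p : ℝ) := by
    rw [intervalIntegral.integral_of_le (le_add_of_nonneg_right (Nat.cast_nonneg m))]
    refine le_trans (setIntegral_mono_set hIntOn ?_ ?_) (le_of_eq hval)
    · filter_upwards [ae_restrict_mem measurableSet_Ioi] with x hx
      have : (0:ℝ) < x := hx
      simp only [hF]
      positivity
    · refine HasSubset.Subset.eventuallyLE fun x hx => ?_
      exact lt_of_le_of_lt (by positivity) hx.1
  have hexp_pow : Real.exp ((p : ℝ) + 1) = Real.exp 1 ^ (p + 1) := by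
    rw [← Real.exp_nat_mul]
    congr 1
    push_cast
    ring
  calc ∑ k ∈ Finset.range m, ((p : ℝ) + 1 + k) ^ p * Real.exp (-(k : ℝ))
      = ∑ i ∈ Finset.range m, g (-1 + ((i + 1 : ℕ) : ℝ)) := hLHS
    _ ≤ ∫ x in (-1 : ℝ)..(-1 + m), g x := hsum
    _ = Real.exp ((p : ℝ) + 1) * ∫ y in ((p : ℝ))..((p : ℝ) + m), F y := hint_eq
    _ ≤ Real.exp ((p : ℝ) + 1) * (Nat.factorial p : ℝ) :=
        mul_le_mul_of_nonneg_left hle (Real.exp_nonneg _)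
    _ = Real.exp 1 ^ (p + 1) * (Nat.factorial p : ℝ) := by rw [hexp_pow]

/-- Quantitative bound for the tail of the optimally truncated modified vector field:
if `h₀ = r/(2eηM)`, `1 ≤ p < n`, `h > 0` with `n ≤ h₀/h`, and the coefficient vectors
satisfy `‖v_j‖ ≤ (ln 2)·η·M·(2ηMj/r)^{j−1}` for `p+1 ≤ j ≤ n`, then
`‖Σ_{j=p}^{n−1} h^j v_{j+1}‖ ≤ (ln 2)·η·M·(2ηMh/r)^p·e^{p+1}·p!`, and in particular it
is bounded by `c(η,p)·r^{−p}·M^{p+1}·h^p` with `c(η,p) = (ln 2)·η·(2η)^p·e^{p+1}·p!`. -/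
theorem stmt5 {X : Type*} [NormedAddCommGroup X] [NormedSpace ℝ X]
    (M r η : ℝ) (hM : 0 < M) (hr : 0 < r) (hη : 0 < η)
    (p n : ℕ) (hp : 1 ≤ p) (hpn : p < n)
    (h : ℝ) (hh : 0 < h) (hn : (n : ℝ) ≤ r / (2 * Real.exp 1 * η * M) / h)
    (v : ℕ → X)
    (hv : ∀ j : ℕ, p + 1 ≤ j → j ≤ n →
      ‖v j‖ ≤ Real.log 2 * η * M * (2 * η * M * (j : ℝ) / r) ^ (j - 1)) :
    ‖∑ j ∈ Finset.Ico p n, h ^ j • v (j + 1)‖ ≤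
        Real.log 2 * η * M * (2 * η * M * h / r) ^ p * Real.exp 1 ^ (p + 1) *
          Nat.factorial p ∧
    ‖∑ j ∈ Finset.Ico p n, h ^ j • v (j + 1)‖ ≤
        (Real.log 2 * η * (2 * η) ^ p * Real.exp 1 ^ (p + 1) * Nat.factorial p) *
          M ^ (p + 1) * h ^ p / r ^ p := by
  have hlog : 0 < Real.log 2 := Real.log_pos one_lt_two
  have he : 0 < Real.exp 1 := Real.exp_pos 1
  set L : ℝ := Real.log 2 * η * M with hL
  set c : ℝ := 2 * η * M * h / r with hc
  have hL0 : 0 < L := by rw [hL]; positivity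
  have hc0 : 0 < c := by rw [hc]; positivity
  -- the key smallness: c * n ≤ 1/e
  have hcn : c * n ≤ (Real.exp 1)⁻¹ := by
    rw [div_div] at hn
    have h2 : 0 < 2 * Real.exp 1 * η * M * h := by positivity
    rw [le_div_iff₀ h2] at hn
    rw [hc, inv_eq_one_div, div_mul_eq_mul_div, div_le_div_iff₀ hr he]
    exact le_trans (le_of_eq (by ring)) (le_trans hn (le_of_eq (by ring)))
  have key1 : ‖∑ j ∈ Finset.Ico p n, h ^ j • v (j + 1)‖ ≤
      L * c ^ p * Real.exp 1 ^ (p + 1) * Nat.factorial p := by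
    calc ‖∑ j ∈ Finset.Ico p n, h ^ j • v (j + 1)‖
        ≤ ∑ j ∈ Finset.Ico p n, ‖h ^ j • v (j + 1)‖ := norm_sum_le _ _
      _ = ∑ k ∈ Finset.range (n - p), ‖h ^ (p + k) • v (p + k + 1)‖ := by
          rw [Finset.sum_Ico_eq_sum_range]
      _ ≤ ∑ k ∈ Finset.range (n - p),
            L * c ^ p * (((p : ℝ) + 1 + k) ^ p * Real.exp (-(k : ℝ))) := by
          refine Finset.sum_le_sum fun k hk => ?_
          have hkn : p + k + 1 ≤ n := by
            have := Finset.mem_range.mp hk; omega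
          have hvk := hv (p + k + 1) (by omega) hkn
          rw [Nat.add_sub_cancel] at hvk
          have hcast : ((p : ℝ) + 1 + k) ≤ (n : ℝ) := by
            have := (Nat.cast_le (α := ℝ)).mpr hkn
            push_cast at this
            linarith
          have hB : (0 : ℝ) ≤ c * ((p : ℝ) + 1 + k) := by positivity
          have hBe : c * ((p : ℝ) + 1 + k) ≤ (Real.exp 1)⁻¹ :=
            le_trans (mul_le_mul_of_nonneg_left hcast hc0.le) hcn
          have hAh : (2 * η * M * ((p + k + 1 : ℕ) : ℝ) / r) * h
              = c * ((p : ℝ) + 1 + k) := by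
            rw [hc]; push_cast; ring
          have hpowbd : (c * ((p : ℝ) + 1 + k)) ^ (p + k)
              ≤ c ^ p * (((p : ℝ) + 1 + k) ^ p * Real.exp (-(k : ℝ))) := by
            have h3 : ((Real.exp 1)⁻¹) ^ k = Real.exp (-(k : ℝ)) := by
              rw [← Real.exp_neg, ← Real.exp_nat_mul]; ring_nf
            calc (c * ((p : ℝ) + 1 + k)) ^ (p + k)
                = (c * ((p : ℝ) + 1 + k)) ^ p * (c * ((p : ℝ) + 1 + k)) ^ k :=
                  pow_add _ _ _
              _ ≤ (c * ((p : ℝ) + 1 + k)) ^ p * ((Real.exp 1)⁻¹) ^ k :=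
                  mul_le_mul_of_nonneg_left (pow_le_pow_left₀ hB hBe k)
                    (pow_nonneg hB p)
              _ = c ^ p * (((p : ℝ) + 1 + k) ^ p * Real.exp (-(k : ℝ))) := by
                  rw [mul_pow, h3]; ring
          calc ‖h ^ (p + k) • v (p + k + 1)‖
              = h ^ (p + k) * ‖v (p + k + 1)‖ := by
                rw [norm_smul, Real.norm_eq_abs, abs_of_pos (pow_pos hh _)]
            _ ≤ h ^ (p + k) *
                  (L * (2 * η * M * ((p + k + 1 : ℕ) : ℝ) / r) ^ (p + k)) :=
                mul_le_mul_of_nonneg_left hvk (pow_pos hh _).le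
            _ = L * ((2 * η * M * ((p + k + 1 : ℕ) : ℝ) / r) * h) ^ (p + k) := by
                rw [mul_pow]; ring
            _ = L * (c * ((p : ℝ) + 1 + k)) ^ (p + k) := by rw [hAh]
            _ ≤ L * (c ^ p * (((p : ℝ) + 1 + k) ^ p * Real.exp (-(k : ℝ)))) :=
                mul_le_mul_of_nonneg_left hpowbd hL0.le
            _ = L * c ^ p * (((p : ℝ) + 1 + k) ^ p * Real.exp (-(k : ℝ))) := by
                ring
      _ = L * c ^ p * ∑ k ∈ Finset.range (n - p),
            ((p : ℝ) + 1 + k) ^ p * Real.exp (-(k : ℝ)) := by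
          rw [← Finset.mul_sum]
      _ ≤ L * c ^ p * (Real.exp 1 ^ (p + 1) * Nat.factorial p) :=
          mul_le_mul_of_nonneg_left (aux_sum p (n - p) hp) (by positivity)
      _ = L * c ^ p * Real.exp 1 ^ (p + 1) * Nat.factorial p := by ring
  refine ⟨key1, le_trans key1 (le_of_eq ?_)⟩
  rw [hL, hc, div_pow]
  field_simp
  ring
end

section
/- Let Y be a real Hilbert space, D ⊆ Y open and star-shaped with respect to a point U₀ ∈ D, and let G : D → Y be continuously Fréchet differentiable such that for every U ∈ D the derivative DG(U) is a symmetric bounded operator, i.e. ⟨DG(U)W₁, W₂⟩ = ⟨W₁, DG(U)W₂⟩ for all W₁, W₂ ∈ Y. Define V : D → ℝ by V(U) = ∫₀¹ ⟨G(t·U + (1−t)·U₀), U − U₀⟩ dt. Then V is Fréchet differentiable on D with DV(U)·W = ⟨G(U), W⟩ for all U ∈ D and W ∈ Y; that is, G = ∇V, so G is a gradient vector field. -/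
open scoped RealInnerProductSpace

open Metric Set intervalIntegral

set_option maxHeartbeats 1000000
set_option synthInstance.maxHeartbeats 400000

/-- Integrability lemma on a real Hilbert space: if `D` is open and star-shaped with
respect to `U₀ ∈ D`, `G` is `C¹` on `D`, and each derivative `DG(U)` is symmetric, then
`V(U) = ∫₀¹ ⟨G(tU + (1−t)U₀), U − U₀⟩ dt` is Fréchet differentiable on `D` with
`DV(U)·W = ⟨G(U), W⟩`, i.e. `G = ∇V` is a gradient vector field. -/
theorem stmt8 {Y : Type*} [NormedAddCommGroup Y] [InnerProductSpace ℝ Y] [CompleteSpace Y]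
    (D : Set Y) (hD : IsOpen D) (U₀ : Y) (hU₀ : U₀ ∈ D) (hstar : StarConvex ℝ U₀ D)
    (G : Y → Y) (hG : ContDiffOn ℝ 1 G D)
    (hsym : ∀ U ∈ D, ∀ W₁ W₂ : Y,
      ⟪fderiv ℝ G U W₁, W₂⟫ = ⟪W₁, fderiv ℝ G U W₂⟫) :
    ∀ U ∈ D,
      HasFDerivAt (fun U' : Y => ∫ t in (0:ℝ)..1, ⟪G (t • U' + (1 - t) • U₀), U' - U₀⟫)
        (innerSL ℝ (G U)) U := by
  intro U hU
  -- the curve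
  set γ : ℝ → Y → Y := fun t x => t • x + (1 - t) • U₀ with hγdef
  have hγcont : ∀ x : Y, Continuous (fun t : ℝ => γ t x) := by
    intro x; simp only [hγdef]; fun_prop
  have hsegD : ∀ t ∈ Icc (0:ℝ) 1, γ t U ∈ D := by
    intro t ht
    have := hstar hU (by linarith [ht.2] : (0:ℝ) ≤ 1 - t) ht.1 (by ring)
    simpa [hγdef, add_comm] using this
  -- differentiability of G at points of D
  have hGd : ∀ y ∈ D, HasFDerivAt G (fderiv ℝ G y) y := fun y hy =>
    ((hG.differentiableOn one_ne_zero).differentiableAt (hD.mem_nhds hy)).hasFDerivAt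
  have hDGcont : ContinuousOn (fderiv ℝ G) D := hG.continuousOn_fderiv_of_isOpen hD le_rfl
  -- bounds for `G` and `fderiv G` on the compact segment
  have hK0 : IsCompact ((fun t : ℝ => γ t U) '' Icc 0 1) :=
    isCompact_Icc.image (hγcont U)
  have hK0D : (fun t : ℝ => γ t U) '' Icc 0 1 ⊆ D := by
    rintro _ ⟨t, ht, rfl⟩; exact hsegD t ht
  obtain ⟨M₁, hM₁⟩ := hK0.exists_bound_of_continuousOn (hG.continuousOn.mono hK0D)
  obtain ⟨M₂, hM₂⟩ := hK0.exists_bound_of_continuousOn (hDGcont.mono hK0D)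
  -- an open set containing the segment on which `G` and `fderiv G` are bounded
  set V : Set Y := (D ∩ (fun y => ‖G y‖) ⁻¹' Iio (M₁ + 1)) ∩
      (D ∩ (fun y => ‖fderiv ℝ G y‖) ⁻¹' Iio (M₂ + 1)) with hVdef
  have hVopen : IsOpen V := by
    apply IsOpen.inter
    · exact (hG.continuousOn.norm).isOpen_inter_preimage hD isOpen_Iio
    · exact (hDGcont.norm).isOpen_inter_preimage hD isOpen_Iio
  have hK0V : (fun t : ℝ => γ t U) '' Icc 0 1 ⊆ V := by
    rintro _ ⟨t, ht, rfl⟩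
    refine ⟨⟨hsegD t ht, ?_⟩, hsegD t ht, ?_⟩
    · exact lt_of_le_of_lt (hM₁ _ ⟨t, ht, rfl⟩) (by linarith)
    · exact lt_of_le_of_lt (hM₂ _ ⟨t, ht, rfl⟩) (by linarith)
  obtain ⟨δ, hδ, hδV⟩ := hK0.exists_thickening_subset_open hVopen hK0V
  set ε : ℝ := δ / 2 with hε
  have hεpos : 0 < ε := by positivity
  have hεδ : ε < δ := by simp only [hε]; linarith
  -- points reached from the closed ball lie in `V`
  have hmemV : ∀ t ∈ Icc (0:ℝ) 1, ∀ x ∈ closedBall U ε, γ t x ∈ V := by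
    intro t ht x hx
    apply hδV
    rw [Metric.mem_thickening_iff]
    refine ⟨γ t U, ⟨t, ht, rfl⟩, ?_⟩
    have hdiffpt : γ t x - γ t U = t • (x - U) := by
      simp only [hγdef]; rw [smul_sub]; abel
    rw [dist_eq_norm, hdiffpt, norm_smul]
    have h1 : ‖x - U‖ ≤ ε := by rwa [← dist_eq_norm, ← Metric.mem_closedBall]
    have h2 : |t| ≤ 1 := by rw [abs_of_nonneg ht.1]; exact ht.2
    calc |t| * ‖x - U‖ ≤ 1 * ε :=
          mul_le_mul h2 h1 (norm_nonneg _) zero_le_one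
      _ < δ := by rw [one_mul]; exact hεδ
  have hVD : V ⊆ D := fun y hy => hy.1.1
  have hVG : ∀ y ∈ V, ‖G y‖ ≤ M₁ + 1 := fun y hy => le_of_lt hy.1.2
  have hVDG : ∀ y ∈ V, ‖fderiv ℝ G y‖ ≤ M₂ + 1 := fun y hy => le_of_lt hy.2.2
  -- the candidate derivative
  set F' : Y → ℝ → Y →L[ℝ] ℝ := fun x t =>
    t • ((innerSL ℝ (x - U₀)).comp (fderiv ℝ G (γ t x))) + innerSL ℝ (G (γ t x)) with hF'def
  -- continuity of F' U on Icc 0 1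
  have hγUcont : ContinuousOn (fun t : ℝ => γ t U) (Icc 0 1) := (hγcont U).continuousOn
  have hγmaps : MapsTo (fun t : ℝ => γ t U) (Icc 0 1) D := fun t ht => hsegD t ht
  have hGγcont : ContinuousOn (fun t : ℝ => G (γ t U)) (Icc 0 1) :=
    hG.continuousOn.comp hγUcont hγmaps
  have hDGγcont : ContinuousOn (fun t : ℝ => fderiv ℝ G (γ t U)) (Icc 0 1) :=
    hDGcont.comp hγUcont hγmaps
  have hF'cont : ContinuousOn (fun t => F' U t) (Icc 0 1) := by
    apply ContinuousOn.add
    · exact continuousOn_id.smul (continuousOn_const.clm_comp hDGγcont)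
    · exact (innerSL ℝ (E := Y)).continuous.comp_continuousOn hGγcont
  have hF'int : IntervalIntegrable (fun t => F' U t) MeasureTheory.volume 0 1 :=
    (hF'cont.mono (by rw [Set.uIcc_of_le zero_le_one])).intervalIntegrable
  -- derivative of x ↦ F x t at points of the ball
  have hdiff : ∀ t ∈ Icc (0:ℝ) 1, ∀ x ∈ ball U ε,
      HasFDerivAt (fun x' => ⟪G (γ t x'), x' - U₀⟫) (F' x t) x := by
    intro t ht x hx
    have hxD : γ t x ∈ D := hVD (hmemV t ht x (ball_subset_closedBall hx))
    have hc : HasFDerivAt (fun x' : Y => γ t x') (t • ContinuousLinearMap.id ℝ Y) x := by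
      simp only [hγdef]
      exact ((hasFDerivAt_id x).const_smul t).add_const ((1 - t) • U₀)
    have hf : HasFDerivAt (fun x' => G (γ t x'))
        ((fderiv ℝ G (γ t x)).comp (t • ContinuousLinearMap.id ℝ Y)) x :=
      (hGd _ hxD).comp x hc
    have hg : HasFDerivAt (fun x' : Y => x' - U₀) (ContinuousLinearMap.id ℝ Y) x :=
      (hasFDerivAt_id x).sub_const U₀
    have h := hf.inner ℝ hg
    refine h.congr_fderiv ?_
    ext W
    simp only [hF'def, ContinuousLinearMap.coe_comp', Function.comp_apply,
      fderivInnerCLM_apply, ContinuousLinearMap.prod_apply, ContinuousLinearMap.add_apply,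
      ContinuousLinearMap.smul_apply, ContinuousLinearMap.coe_id', id_eq, innerSL_apply_apply,
      ContinuousLinearMap.coe_smul', Pi.smul_apply, smul_eq_mul, map_smul,
      real_inner_smul_left]
    rw [real_inner_comm ((fderiv ℝ G (γ t x)) W) (x - U₀)]
    ring
  -- differentiation under the integral sign
  have key : HasFDerivAt
      (fun x : Y => ∫ t in (0:ℝ)..1, ⟪G (γ t x), x - U₀⟫)
      (∫ t in (0:ℝ)..1, F' U t) U := by
    have hIoc : Set.uIoc (0:ℝ) 1 = Set.Ioc 0 1 := Set.uIoc_of_le zero_le_one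
    apply intervalIntegral.hasFDerivAt_integral_of_dominated_of_fderiv_le
      (F := fun x t => ⟪G (γ t x), x - U₀⟫)
      (bound := fun _ => (M₂ + 1) * (‖U - U₀‖ + ε) + (M₁ + 1)) (Metric.ball_mem_nhds U hεpos)
    · filter_upwards [Metric.ball_mem_nhds U hεpos] with x hx
      rw [hIoc]
      apply ContinuousOn.aestronglyMeasurable _ measurableSet_Ioc
      apply ContinuousOn.inner
      · exact hG.continuousOn.comp (hγcont x).continuousOn
          (fun t ht => hVD (hmemV t (Ioc_subset_Icc_self ht) x (ball_subset_closedBall hx)))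
      · exact continuousOn_const
    · apply ContinuousOn.intervalIntegrable
      rw [Set.uIcc_of_le zero_le_one]
      exact hGγcont.inner continuousOn_const
    · rw [hIoc]
      exact ((hF'cont.mono Ioc_subset_Icc_self).aestronglyMeasurable measurableSet_Ioc)
    · filter_upwards with t ht x hx
      rw [hIoc] at ht
      have ht' : t ∈ Icc (0:ℝ) 1 := Ioc_subset_Icc_self ht
      have hxV : γ t x ∈ V := hmemV t ht' x (ball_subset_closedBall hx)
      have h1 : ‖G (γ t x)‖ ≤ M₁ + 1 := hVG _ hxV
      have h2 : ‖fderiv ℝ G (γ t x)‖ ≤ M₂ + 1 := hVDG _ hxV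
      have hxn : ‖x - U₀‖ ≤ ‖U - U₀‖ + ε := by
        calc ‖x - U₀‖ = ‖(x - U) + (U - U₀)‖ := by abel_nf
          _ ≤ ‖x - U‖ + ‖U - U₀‖ := norm_add_le _ _
          _ ≤ ‖U - U₀‖ + ε := by
              have : ‖x - U‖ ≤ ε := le_of_lt (by rwa [← dist_eq_norm, ← Metric.mem_ball])
              linarith
      have habs : |t| ≤ 1 := by rw [abs_of_nonneg (le_of_lt ht.1)]; exact ht.2
      have hM₂0 : 0 ≤ M₂ + 1 := le_trans (norm_nonneg _) h2
      have hcomp : ‖(innerSL ℝ (x - U₀)).comp (fderiv ℝ G (γ t x))‖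
          ≤ (‖U - U₀‖ + ε) * (M₂ + 1) := by
        calc ‖(innerSL ℝ (x - U₀)).comp (fderiv ℝ G (γ t x))‖
            ≤ ‖innerSL ℝ (x - U₀)‖ * ‖fderiv ℝ G (γ t x)‖ :=
              ContinuousLinearMap.opNorm_comp_le _ _
          _ = ‖x - U₀‖ * ‖fderiv ℝ G (γ t x)‖ := by rw [innerSL_apply_norm]
          _ ≤ (‖U - U₀‖ + ε) * (M₂ + 1) :=
              mul_le_mul hxn h2 (norm_nonneg _) (by positivity)
      calc ‖F' x t‖ ≤ ‖t • ((innerSL ℝ (x - U₀)).comp (fderiv ℝ G (γ t x)))‖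
            + ‖innerSL ℝ (G (γ t x))‖ := norm_add_le _ _
        _ ≤ |t| * ‖(innerSL ℝ (x - U₀)).comp (fderiv ℝ G (γ t x))‖ + ‖G (γ t x)‖ := by
            have hs := norm_smul_le t ((innerSL ℝ (x - U₀)).comp (fderiv ℝ G (γ t x)))
            rw [Real.norm_eq_abs] at hs
            rw [innerSL_apply_norm]
            linarith
        _ ≤ 1 * ((‖U - U₀‖ + ε) * (M₂ + 1)) + (M₁ + 1) := by
            have h0 : (0:ℝ) ≤ |t| := abs_nonneg t
            have h3 : (0:ℝ) ≤ ‖(innerSL ℝ (x - U₀)).comp (fderiv ℝ G (γ t x))‖ :=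
              norm_nonneg _
            have := mul_le_mul habs hcomp h3 zero_le_one
            linarith
        _ = (M₂ + 1) * (‖U - U₀‖ + ε) + (M₁ + 1) := by ring
    · exact intervalIntegrable_const
    · filter_upwards with t ht x hx
      rw [hIoc] at ht
      exact hdiff t (Ioc_subset_Icc_self ht) x hx
  -- identify the derivative with innerSL ℝ (G U) via the FTC
  have hid : (∫ t in (0:ℝ)..1, F' U t) = innerSL ℝ (G U) := by
    ext W
    rw [ContinuousLinearMap.intervalIntegral_apply hF'int W]
    -- FTC : the integrand is the derivative of t ↦ t * ⟪G (γ t U), W⟫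
    have hφ : ∀ t ∈ Set.uIcc (0:ℝ) 1,
        HasDerivAt (fun s : ℝ => s * ⟪G (γ s U), W⟫) ((F' U t) W) t := by
      intro t ht
      rw [Set.uIcc_of_le zero_le_one] at ht
      have hγd : HasDerivAt (fun s : ℝ => γ s U) (U - U₀) t := by
        have h1 : HasDerivAt (fun s : ℝ => s • U) ((1:ℝ) • U) t :=
          (hasDerivAt_id t).smul_const U
        have h2 : HasDerivAt (fun s : ℝ => (1 - s) • U₀) (((0:ℝ) - 1) • U₀) t :=
          ((hasDerivAt_const t (1:ℝ)).sub (hasDerivAt_id t)).smul_const U₀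
        have h3 := h1.add h2
        simp only [hγdef]
        convert h3 using 1
        · rfl
        · simp [sub_eq_add_neg]
      have hxD : γ t U ∈ D := hsegD t ht
      have hGγd : HasDerivAt (fun s : ℝ => G (γ s U)) (fderiv ℝ G (γ t U) (U - U₀)) t :=
        (hGd _ hxD).comp_hasDerivAt t hγd
      have hinner : HasDerivAt (fun s : ℝ => ⟪G (γ s U), W⟫)
          (⟪G (γ t U), (0:Y)⟫ + ⟪fderiv ℝ G (γ t U) (U - U₀), W⟫) t :=
        hGγd.inner ℝ (hasDerivAt_const t W)
      have hmul := (hasDerivAt_id t).mul hinner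
      refine HasDerivAt.congr_deriv hmul ?_
      simp only [hF'def, ContinuousLinearMap.add_apply, ContinuousLinearMap.smul_apply,
        ContinuousLinearMap.coe_comp', Function.comp_apply, innerSL_apply_apply, smul_eq_mul,
        inner_zero_right, id_eq]
      rw [← hsym _ hxD (U - U₀) W]
      ring
    have hintW : IntervalIntegrable (fun t => (F' U t) W) MeasureTheory.volume 0 1 := by
      apply ContinuousOn.intervalIntegrable
      rw [Set.uIcc_of_le zero_le_one]
      exact (ContinuousLinearMap.apply ℝ ℝ W).continuous.comp_continuousOn hF'cont
    rw [intervalIntegral.integral_eq_sub_of_hasDerivAt hφ hintW]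
    simp [hγdef]
  rw [← hid]
  exact key
end

section
/- For every real ℓ > 1/2 there exists a constant c = c(ℓ) > 0, independent of τ, such that for all τ ≥ 0 and all sequences a, b : ℤ → ℂ with ‖a‖_{τ,ℓ} < ∞ and ‖b‖_{τ,ℓ} < ∞, the convolution a⋆b (given by (a⋆b)_k = Σ_{j∈ℤ} a_j·b_{k−j}) is well defined and satisfies ‖a⋆b‖_{τ,ℓ} ≤ c·‖a‖_{τ,ℓ}·‖b‖_{τ,ℓ}. Equivalently, the Gevrey space G_{τ,ℓ}(S¹;ℂ) of periodic functions with this weighted Fourier-coefficient norm is a topological algebra under pointwise multiplication. -/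
/-- The squared Gevrey norm on Fourier coefficient sequences over `ℤ`:
`‖a‖_{τ,ℓ}² = |a₀|² + Σ_{k∈ℤ} |k|^{2ℓ}·e^{2τ|k|}·|a_k|²` (possibly `+∞`). -/
noncomputable def zGevreyNormSq (τ ℓ : ℝ) (a : ℤ → ℂ) : ENNReal :=
  ENNReal.ofReal (‖a 0‖ ^ 2) +
    ∑' k : ℤ, ENNReal.ofReal
      (|(k : ℝ)| ^ (2 * ℓ) * Real.exp (2 * τ * |(k : ℝ)|) * ‖a k‖ ^ 2)

open ENNReal MeasureTheory

/-- Cauchy–Schwarz for `tsum` over `ℤ` in `ℝ≥0∞`. -/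
lemma zcs (f g : ℤ → ℝ≥0∞) :
    ∑' k, f k * g k ≤ (∑' k, f k ^ (2:ℝ)) ^ (1/2:ℝ) * (∑' k, g k ^ (2:ℝ)) ^ (1/2:ℝ) := by
  have hconj : Real.HolderConjugate 2 2 := .two_two
  have := ENNReal.lintegral_mul_le_Lp_mul_Lq (Measure.count : Measure ℤ) hconj
    (f := f) (g := g) (by measurability) (by measurability)
  simpa [lintegral_count] using this

/-- Young `ℓ¹ ⋆ ℓ² → ℓ²` over `ℤ` in `ℝ≥0∞`. -/
lemma zyoung (f g : ℤ → ℝ≥0∞) :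
    (∑' k, (∑' j, f j * g (k - j)) ^ (2:ℝ)) ^ (1/2:ℝ) ≤
      (∑' j, f j) * (∑' k, g k ^ (2:ℝ)) ^ (1/2:ℝ) := by
  have key : ∀ k : ℤ, (∑' j, f j * g (k - j)) ^ (2:ℝ) ≤
      (∑' j, f j) * ∑' j, f j * g (k - j) ^ (2:ℝ) := by
    intro k
    have h1 : ∑' j, f j * g (k - j)
        = ∑' j, (f j) ^ (1/2:ℝ) * ((f j) ^ (1/2:ℝ) * g (k - j)) := by
      refine tsum_congr fun j => ?_
      rw [← mul_assoc, ← ENNReal.rpow_add_of_nonneg (1/2) (1/2) (by norm_num) (by norm_num)]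
      norm_num
    have h2 := zcs (fun j => (f j) ^ (1/2:ℝ)) (fun j => (f j) ^ (1/2:ℝ) * g (k - j))
    rw [← h1] at h2
    have h3 : ∀ j : ℤ, ((f j) ^ (1/2:ℝ)) ^ (2:ℝ) = f j := by
      intro j; rw [← ENNReal.rpow_mul]; norm_num
    have h4 : ∀ j : ℤ, ((f j) ^ (1/2:ℝ) * g (k - j)) ^ (2:ℝ)
        = f j * g (k - j) ^ (2:ℝ) := by
      intro j; rw [ENNReal.mul_rpow_of_nonneg _ _ (by norm_num : (0:ℝ) ≤ 2), h3]
    simp only [h3, h4] at h2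
    calc (∑' j, f j * g (k - j)) ^ (2:ℝ)
        ≤ ((∑' j, f j) ^ (1/2:ℝ) * (∑' j, f j * g (k - j) ^ (2:ℝ)) ^ (1/2:ℝ)) ^ (2:ℝ) := by
          exact ENNReal.rpow_le_rpow h2 (by norm_num)
      _ = (∑' j, f j) * ∑' j, f j * g (k - j) ^ (2:ℝ) := by
          rw [ENNReal.mul_rpow_of_nonneg _ _ (by norm_num : (0:ℝ) ≤ 2),
            ← ENNReal.rpow_mul, ← ENNReal.rpow_mul]
          norm_num
  have sum_key : ∑' k, (∑' j, f j * g (k - j)) ^ (2:ℝ) ≤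
      (∑' j, f j) ^ (2:ℝ) * ∑' k, g k ^ (2:ℝ) := by
    calc ∑' k, (∑' j, f j * g (k - j)) ^ (2:ℝ)
        ≤ ∑' k, (∑' j, f j) * ∑' j, f j * g (k - j) ^ (2:ℝ) := Summable.tsum_le_tsum key ENNReal.summable ENNReal.summable
      _ = (∑' j, f j) * ∑' (k : ℤ) (j : ℤ), f j * g (k - j) ^ (2:ℝ) := by
          rw [ENNReal.tsum_mul_left]
      _ = (∑' j, f j) * ∑' (j : ℤ) (k : ℤ), f j * g (k - j) ^ (2:ℝ) := by
          rw [ENNReal.tsum_comm]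
      _ = (∑' j, f j) * ∑' (j : ℤ), f j * ∑' (k : ℤ), g (k - j) ^ (2:ℝ) := by
          congr 1; exact tsum_congr fun j => ENNReal.tsum_mul_left
      _ = (∑' j, f j) * ((∑' j, f j) * ∑' k, g k ^ (2:ℝ)) := by
          congr 1
          have : ∀ j : ℤ, ∑' (k : ℤ), g (k - j) ^ (2:ℝ) = ∑' k, g k ^ (2:ℝ) := by
            intro j
            exact (Equiv.subRight j).tsum_eq (fun k => g k ^ (2:ℝ))
          simp only [this]
          rw [ENNReal.tsum_mul_right]
      _ = (∑' j, f j) ^ (2:ℝ) * ∑' k, g k ^ (2:ℝ) := by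
          rw [← mul_assoc]; congr 1
          rw [show (2:ℝ) = 1 + 1 by norm_num,
            ENNReal.rpow_add_of_nonneg 1 1 zero_le_one zero_le_one]
          simp
  calc (∑' k, (∑' j, f j * g (k - j)) ^ (2:ℝ)) ^ (1/2:ℝ)
      ≤ ((∑' j, f j) ^ (2:ℝ) * ∑' k, g k ^ (2:ℝ)) ^ (1/2:ℝ) :=
        ENNReal.rpow_le_rpow sum_key (by norm_num)
    _ = (∑' j, f j) * (∑' k, g k ^ (2:ℝ)) ^ (1/2:ℝ) := by
        rw [ENNReal.mul_rpow_of_nonneg _ _ (by norm_num : (0:ℝ) ≤ 1/2), ← ENNReal.rpow_mul]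
        norm_num

/-- Minkowski. -/
lemma zmink (f g : ℤ → ℝ≥0∞) :
    (∑' k, (f k + g k) ^ (2:ℝ)) ^ (1/2:ℝ) ≤
      (∑' k, f k ^ (2:ℝ)) ^ (1/2:ℝ) + (∑' k, g k ^ (2:ℝ)) ^ (1/2:ℝ) := by
  have := ENNReal.lintegral_Lp_add_le (μ := (Measure.count : Measure ℤ))
    (f := f) (g := g) (by measurability) (by measurability) (by norm_num : (1:ℝ) ≤ 2)
  simpa [lintegral_count] using this

/-- The exponential part of the weight. -/
noncomputable def zV (τ : ℝ) (k : ℤ) : ℝ≥0∞ := ENNReal.ofReal (Real.exp (τ * |(k:ℝ)|))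

/-- The full Gevrey weight. -/
noncomputable def zW (τ ℓ : ℝ) (k : ℤ) : ℝ≥0∞ :=
  if k = 0 then 1 else ENNReal.ofReal (|(k:ℝ)| ^ ℓ) * zV τ k

lemma zV_ne_top (τ : ℝ) (k : ℤ) : zV τ k ≠ ⊤ := ENNReal.ofReal_ne_top

lemma one_le_zV {τ : ℝ} (hτ : 0 ≤ τ) (k : ℤ) : 1 ≤ zV τ k := by
  rw [zV, show (1:ℝ≥0∞) = ENNReal.ofReal 1 by simp]
  exact ENNReal.ofReal_le_ofReal (Real.one_le_exp (by positivity))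

lemma zV_le_zW {τ ℓ : ℝ} (hτ : 0 ≤ τ) (hℓ : 0 ≤ ℓ) (k : ℤ) : zV τ k ≤ zW τ ℓ k := by
  rw [zW]
  split_ifs with h
  · subst h; simp [zV]
  · have h1 : (1:ℝ) ≤ |(k:ℝ)| := by
      rw [← Int.cast_abs]; exact_mod_cast Int.one_le_abs (by simpa using h)
    calc zV τ k = 1 * zV τ k := (one_mul _).symm
      _ ≤ ENNReal.ofReal (|(k:ℝ)| ^ ℓ) * zV τ k := by
          gcongr
          rw [show (1:ℝ≥0∞) = ENNReal.ofReal 1 by simp]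
          exact ENNReal.ofReal_le_ofReal (Real.one_le_rpow h1 hℓ)

lemma one_le_zW {τ ℓ : ℝ} (hτ : 0 ≤ τ) (hℓ : 0 ≤ ℓ) (k : ℤ) : 1 ≤ zW τ ℓ k :=
  le_trans (one_le_zV hτ k) (zV_le_zW hτ hℓ k)

lemma zW_ne_top (τ ℓ : ℝ) (k : ℤ) : zW τ ℓ k ≠ ⊤ := by
  rw [zW]; split_ifs
  · simp
  · exact ENNReal.mul_ne_top ENNReal.ofReal_ne_top ENNReal.ofReal_ne_top

lemma zabs_sq (z : ℂ) :
    ENNReal.ofReal (‖z‖ ^ 2) = ENNReal.ofReal (‖z‖) ^ (2:ℝ) := by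
  have h : ‖z‖ ^ 2 = ‖z‖ ^ (2:ℝ) := by
    rw [← Real.rpow_natCast (‖z‖) 2]; norm_num
  rw [h, ← ENNReal.ofReal_rpow_of_nonneg (norm_nonneg z) (by norm_num : (0:ℝ) ≤ 2)]

/-- The Gevrey norm squared as an honest weighted `ℓ²` sum. -/
lemma zGevrey_eq (τ ℓ : ℝ) (hℓ : 0 < ℓ) (a : ℤ → ℂ) :
    zGevreyNormSq τ ℓ a = ∑' k, (zW τ ℓ k * ENNReal.ofReal (‖a k‖)) ^ (2:ℝ) := by
  rw [zGevreyNormSq, ENNReal.tsum_eq_add_tsum_ite (f := fun k =>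
      (zW τ ℓ k * ENNReal.ofReal (‖a k‖)) ^ (2:ℝ)) 0,
    ENNReal.tsum_eq_add_tsum_ite (f := fun k : ℤ => ENNReal.ofReal
      (|(k : ℝ)| ^ (2 * ℓ) * Real.exp (2 * τ * |(k : ℝ)|) * ‖a k‖ ^ 2)) 0]
  have hL0 : ENNReal.ofReal (|((0:ℤ) : ℝ)| ^ (2 * ℓ) * Real.exp (2 * τ * |((0:ℤ) : ℝ)|)
      * ‖a 0‖ ^ 2) = 0 := by
    rw [show ((0:ℤ):ℝ) = 0 by norm_num, abs_zero, Real.zero_rpow (by positivity), zero_mul,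
      zero_mul, ENNReal.ofReal_zero]
  have hR0 : (zW τ ℓ 0 * ENNReal.ofReal (‖a 0‖)) ^ (2:ℝ)
      = ENNReal.ofReal (‖a 0‖ ^ 2) := by
    rw [show zW τ ℓ 0 = 1 from if_pos rfl, one_mul, zabs_sq]
  rw [hL0, hR0, zero_add]
  congr 1
  refine tsum_congr fun k => ?_
  split_ifs with h
  · rfl
  · rw [zW, if_neg h, zV,
      ← ENNReal.ofReal_mul (by positivity), ← ENNReal.ofReal_mul (by positivity),
      ENNReal.ofReal_rpow_of_nonneg (by positivity) (by norm_num : (0:ℝ) ≤ 2)]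
    congr 1
    rw [Real.mul_rpow (by positivity) (norm_nonneg _),
      Real.mul_rpow (by positivity) (Real.exp_pos _).le,
      ← Real.rpow_natCast (‖a k‖) 2, ← Real.rpow_mul (abs_nonneg _)]
    have he : Real.exp (τ * |(k:ℝ)|) ^ (2:ℝ) = Real.exp (2 * τ * |(k:ℝ)|) := by
      rw [← Real.exp_mul]; ring_nf
    rw [he]
    push_cast
    ring_nf

lemma rpow_add_le (x y ℓ : ℝ) (hx : 0 ≤ x) (hy : 0 ≤ y) (hℓ : 0 ≤ ℓ) :
    (x + y) ^ ℓ ≤ 2 ^ ℓ * (x ^ ℓ + y ^ ℓ) := by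
  rcases le_total x y with h | h
  · calc (x + y) ^ ℓ ≤ (2 * y) ^ ℓ := Real.rpow_le_rpow (by linarith) (by linarith) hℓ
      _ = 2 ^ ℓ * y ^ ℓ := Real.mul_rpow (by norm_num) hy
      _ ≤ 2 ^ ℓ * (x ^ ℓ + y ^ ℓ) := by
          have := Real.rpow_nonneg hx ℓ
          have h2 : (0:ℝ) < 2 ^ ℓ := Real.rpow_pos_of_pos (by norm_num) ℓ
          nlinarith
  · calc (x + y) ^ ℓ ≤ (2 * x) ^ ℓ := Real.rpow_le_rpow (by linarith) (by linarith) hℓ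
      _ = 2 ^ ℓ * x ^ ℓ := Real.mul_rpow (by norm_num) hx
      _ ≤ 2 ^ ℓ * (x ^ ℓ + y ^ ℓ) := by
          have := Real.rpow_nonneg hy ℓ
          have h2 : (0:ℝ) < 2 ^ ℓ := Real.rpow_pos_of_pos (by norm_num) ℓ
          nlinarith

lemma ofReal_rpow_zV_le {τ ℓ : ℝ} (hℓ : 0 < ℓ) (j : ℤ) :
    ENNReal.ofReal (|(j:ℝ)| ^ ℓ) * zV τ j ≤ zW τ ℓ j := by
  rw [zW]
  split_ifs with h
  · subst h
    simp [Real.zero_rpow hℓ.ne']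
  · exact le_rfl

lemma one_le_ofReal_two_rpow {ℓ : ℝ} (hℓ : 0 ≤ ℓ) : (1:ℝ≥0∞) ≤ ENNReal.ofReal (2 ^ ℓ) := by
  rw [show (1:ℝ≥0∞) = ENNReal.ofReal 1 by simp]
  exact ENNReal.ofReal_le_ofReal (Real.one_le_rpow (by norm_num) hℓ)

/-- The key submultiplicativity of the Gevrey weight. -/
lemma zW_bound {τ ℓ : ℝ} (hτ : 0 ≤ τ) (hℓ : 0 < ℓ) (k j : ℤ) :
    zW τ ℓ k ≤ ENNReal.ofReal (2 ^ ℓ) *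
      (zW τ ℓ j * zV τ (k - j) + zV τ j * zW τ ℓ (k - j)) := by
  by_cases hk : k = 0
  · subst hk
    have h1 : (1:ℝ≥0∞) ≤ zV τ j * zW τ ℓ (0 - j) := by
      calc (1:ℝ≥0∞) = 1 * 1 := (one_mul 1).symm
        _ ≤ zV τ j * zW τ ℓ (0 - j) :=
          mul_le_mul' (one_le_zV hτ j) (one_le_zW hτ hℓ.le (0 - j))
    calc zW τ ℓ 0 = 1 := if_pos rfl
      _ ≤ zV τ j * zW τ ℓ (0 - j) := h1
      _ ≤ zW τ ℓ j * zV τ (0 - j) + zV τ j * zW τ ℓ (0 - j) := le_add_self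
      _ ≤ ENNReal.ofReal (2 ^ ℓ) *
          (zW τ ℓ j * zV τ (0 - j) + zV τ j * zW τ ℓ (0 - j)) :=
        le_mul_of_one_le_left zero_le (one_le_ofReal_two_rpow hℓ.le)
  · -- k ≠ 0
    set m := k - j with hm
    have habs : |(k:ℝ)| ≤ |(j:ℝ)| + |(m:ℝ)| := by
      have : (k:ℝ) = (j:ℝ) + (m:ℝ) := by push_cast [hm]; ring
      rw [this]; exact abs_add_le _ _
    have hVk : zV τ k ≤ zV τ j * zV τ m := by
      rw [zV, zV, zV, ← ENNReal.ofReal_mul (Real.exp_pos _).le, ← Real.exp_add]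
      exact ENNReal.ofReal_le_ofReal (Real.exp_le_exp.2 (by nlinarith))
    have hpow : |(k:ℝ)| ^ ℓ ≤ 2 ^ ℓ * (|(j:ℝ)| ^ ℓ + |(m:ℝ)| ^ ℓ) :=
      le_trans (Real.rpow_le_rpow (abs_nonneg _) habs hℓ.le)
        (rpow_add_le _ _ _ (abs_nonneg _) (abs_nonneg _) hℓ.le)
    calc zW τ ℓ k = ENNReal.ofReal (|(k:ℝ)| ^ ℓ) * zV τ k := if_neg hk
      _ ≤ ENNReal.ofReal (2 ^ ℓ * (|(j:ℝ)| ^ ℓ + |(m:ℝ)| ^ ℓ)) * (zV τ j * zV τ m) :=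
        mul_le_mul' (ENNReal.ofReal_le_ofReal hpow) hVk
      _ = ENNReal.ofReal (2 ^ ℓ) *
          ((ENNReal.ofReal (|(j:ℝ)| ^ ℓ) * zV τ j) * zV τ m
            + zV τ j * (ENNReal.ofReal (|(m:ℝ)| ^ ℓ) * zV τ m)) := by
        rw [ENNReal.ofReal_mul (by positivity),
          ENNReal.ofReal_add (by positivity) (by positivity)]
        ring
      _ ≤ ENNReal.ofReal (2 ^ ℓ) *
          (zW τ ℓ j * zV τ m + zV τ j * zW τ ℓ m) := by
        gcongr
        · exact ofReal_rpow_zV_le hℓ j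
        · exact ofReal_rpow_zV_le hℓ m

/-- The summable tail constant. -/
noncomputable def zC (ℓ : ℝ) : ℝ := 1 + ∑' k : ℤ, |(k:ℝ)| ^ (-(2 * ℓ))

lemma zC_pos (ℓ : ℝ) (hℓ : 1/2 < ℓ) : 0 < zC ℓ := by
  have hs : Summable fun k : ℤ => |(k:ℝ)| ^ (-(2 * ℓ)) :=
    Real.summable_abs_int_rpow (by linarith)
  have : 0 ≤ ∑' k : ℤ, |(k:ℝ)| ^ (-(2 * ℓ)) :=
    tsum_nonneg fun k => Real.rpow_nonneg (abs_nonneg _) _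
  rw [zC]; linarith


/-- `ℓ¹` bound on the exponentially-weighted sequence. -/
lemma zl1 {τ ℓ : ℝ} (hτ : 0 ≤ τ) (hℓ : 1/2 < ℓ) (b : ℤ → ℂ) :
    ∑' k, zV τ k * ENNReal.ofReal (‖b k‖) ≤
      ENNReal.ofReal (zC ℓ) ^ (1/2:ℝ) *
        (∑' k, (zW τ ℓ k * ENNReal.ofReal (‖b k‖)) ^ (2:ℝ)) ^ (1/2:ℝ) := by
  have hℓ0 : 0 < ℓ := by linarith
  set r : ℤ → ℝ≥0∞ := fun k => if k = 0 then 1 else ENNReal.ofReal (|(k:ℝ)| ^ (-ℓ)) with hr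
  have hpt : ∀ k : ℤ, zV τ k * ENNReal.ofReal (‖b k‖)
      = r k * (zW τ ℓ k * ENNReal.ofReal (‖b k‖)) := by
    intro k
    by_cases h : k = 0
    · subst h; simp [hr, zW, zV]
    · have hk1 : (0:ℝ) < |(k:ℝ)| := by
        simp only [← Int.cast_abs]
        exact_mod_cast abs_pos.2 (fun hh => h hh)
      have key : ENNReal.ofReal (|(k:ℝ)| ^ (-ℓ)) * ENNReal.ofReal (|(k:ℝ)| ^ ℓ) = 1 := by
        rw [← ENNReal.ofReal_mul (Real.rpow_nonneg (abs_nonneg _) _), ← Real.rpow_add hk1]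
        norm_num
      have hrk : r k = ENNReal.ofReal (|(k:ℝ)| ^ (-ℓ)) := by rw [hr]; exact if_neg h
      have hwk : zW τ ℓ k = ENNReal.ofReal (|(k:ℝ)| ^ ℓ) * zV τ k := if_neg h
      rw [hrk, hwk]
      calc zV τ k * ENNReal.ofReal (‖b k‖)
          = (ENNReal.ofReal (|(k:ℝ)| ^ (-ℓ)) * ENNReal.ofReal (|(k:ℝ)| ^ ℓ)) *
            (zV τ k * ENNReal.ofReal (‖b k‖)) := by rw [key, one_mul]
        _ = ENNReal.ofReal (|(k:ℝ)| ^ (-ℓ)) *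
            (ENNReal.ofReal (|(k:ℝ)| ^ ℓ) * zV τ k * ENNReal.ofReal (‖b k‖)) := by
            ring
  have hrsum : ∑' k, r k ^ (2:ℝ) ≤ ENNReal.ofReal (zC ℓ) := by
    have hs : Summable fun k : ℤ => |(k:ℝ)| ^ (-(2 * ℓ)) :=
      Real.summable_abs_int_rpow (by linarith)
    have hb2 : ∀ k : ℤ, r k ^ (2:ℝ) ≤
        (if k = 0 then (1:ℝ≥0∞) else 0) + ENNReal.ofReal (|(k:ℝ)| ^ (-(2 * ℓ))) := by
      intro k
      by_cases h : k = 0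
      · subst h; simp [hr]
      · have hrk : r k = ENNReal.ofReal (|(k:ℝ)| ^ (-ℓ)) := by rw [hr]; exact if_neg h
        rw [hrk, if_neg h, zero_add,
          ENNReal.ofReal_rpow_of_nonneg (Real.rpow_nonneg (abs_nonneg _) _)
            (by norm_num : (0:ℝ) ≤ 2),
          ← Real.rpow_mul (abs_nonneg _)]
        rw [show -ℓ * 2 = -(2 * ℓ) by ring]
    calc ∑' k, r k ^ (2:ℝ)
        ≤ ∑' k : ℤ, ((if k = 0 then (1:ℝ≥0∞) else 0) + ENNReal.ofReal (|(k:ℝ)| ^ (-(2 * ℓ)))) :=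
          Summable.tsum_le_tsum hb2 ENNReal.summable ENNReal.summable
      _ = (∑' k : ℤ, if k = 0 then (1:ℝ≥0∞) else 0)
          + ∑' k : ℤ, ENNReal.ofReal (|(k:ℝ)| ^ (-(2 * ℓ))) := ENNReal.tsum_add
      _ = 1 + ENNReal.ofReal (∑' k : ℤ, |(k:ℝ)| ^ (-(2 * ℓ))) := by
          rw [tsum_ite_eq, ENNReal.ofReal_tsum_of_nonneg
            (fun k => Real.rpow_nonneg (abs_nonneg _) _) hs]
      _ = ENNReal.ofReal (zC ℓ) := by
          rw [zC, ENNReal.ofReal_add zero_le_one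
            (tsum_nonneg fun k => Real.rpow_nonneg (abs_nonneg _) _)]
          simp
  calc ∑' k, zV τ k * ENNReal.ofReal (‖b k‖)
      = ∑' k, r k * (zW τ ℓ k * ENNReal.ofReal (‖b k‖)) := tsum_congr hpt
    _ ≤ (∑' k, r k ^ (2:ℝ)) ^ (1/2:ℝ) *
        (∑' k, (zW τ ℓ k * ENNReal.ofReal (‖b k‖)) ^ (2:ℝ)) ^ (1/2:ℝ) :=
        zcs r _
    _ ≤ ENNReal.ofReal (zC ℓ) ^ (1/2:ℝ) *
        (∑' k, (zW τ ℓ k * ENNReal.ofReal (‖b k‖)) ^ (2:ℝ)) ^ (1/2:ℝ) :=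
        mul_le_mul' (ENNReal.rpow_le_rpow hrsum (by norm_num)) le_rfl

/-- The Gevrey space `G_{τ,ℓ}(S¹;ℂ)` is a topological algebra: for every `ℓ > 1/2`
there is a constant `c = c(ℓ) > 0`, independent of `τ`, such that for all `τ ≥ 0` and
sequences `a, b` of finite Gevrey norm, the convolution `a⋆b` is well defined and
satisfies `‖a⋆b‖_{τ,ℓ} ≤ c·‖a‖_{τ,ℓ}·‖b‖_{τ,ℓ}`. -/
theorem stmt9 (ℓ : ℝ) (hℓ : 1 / 2 < ℓ) :
    ∃ c : ℝ, 0 < c ∧ ∀ τ : ℝ, 0 ≤ τ → ∀ a b : ℤ → ℂ,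
      zGevreyNormSq τ ℓ a < ⊤ → zGevreyNormSq τ ℓ b < ⊤ →
      (∀ k : ℤ, Summable fun j : ℤ => a j * b (k - j)) ∧
      (zGevreyNormSq τ ℓ fun k => ∑' j : ℤ, a j * b (k - j)) ^ (1 / 2 : ℝ) ≤
        ENNReal.ofReal c * (zGevreyNormSq τ ℓ a) ^ (1 / 2 : ℝ) *
          (zGevreyNormSq τ ℓ b) ^ (1 / 2 : ℝ) := by

  have hℓ0 : 0 < ℓ := by linarith
  have hzC := zC_pos ℓ hℓ
  refine ⟨2 * 2 ^ ℓ * Real.sqrt (zC ℓ), by positivity, ?_⟩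
  intro τ hτ a b ha hb
  rw [zGevrey_eq τ ℓ hℓ0 a, zGevrey_eq τ ℓ hℓ0 b,
    zGevrey_eq τ ℓ hℓ0 (fun k => ∑' j, a j * b (k - j))]
  rw [zGevrey_eq τ ℓ hℓ0 a] at ha
  rw [zGevrey_eq τ ℓ hℓ0 b] at hb
  set A : ℤ → ℝ≥0∞ := fun k => zW τ ℓ k * ENNReal.ofReal (‖a k‖) with hA
  set B : ℤ → ℝ≥0∞ := fun k => zW τ ℓ k * ENNReal.ofReal (‖b k‖) with hB
  set Va : ℤ → ℝ≥0∞ := fun k => zV τ k * ENNReal.ofReal (‖a k‖) with hVa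
  set Vb : ℤ → ℝ≥0∞ := fun k => zV τ k * ENNReal.ofReal (‖b k‖) with hVb
  set Na := ∑' k, A k ^ (2:ℝ) with hNa
  set Nb := ∑' k, B k ^ (2:ℝ) with hNb
  -- ℓ¹ bounds
  have hSa : ∑' k, Va k ≤ ENNReal.ofReal (zC ℓ) ^ (1/2:ℝ) * Na ^ (1/2:ℝ) := zl1 hτ hℓ a
  have hSb : ∑' k, Vb k ≤ ENNReal.ofReal (zC ℓ) ^ (1/2:ℝ) * Nb ^ (1/2:ℝ) := zl1 hτ hℓ b
  have hNa2 : Na ^ (1/2:ℝ) ≠ ⊤ :=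
    ENNReal.rpow_ne_top_of_nonneg (by norm_num) ha.ne
  have hNb2 : Nb ^ (1/2:ℝ) ≠ ⊤ :=
    ENNReal.rpow_ne_top_of_nonneg (by norm_num) hb.ne
  have hSa_fin : ∑' k, Va k < ⊤ :=
    lt_of_le_of_lt hSa (ENNReal.mul_lt_top (ENNReal.rpow_ne_top_of_nonneg
      (by norm_num : (0:ℝ) ≤ 1/2) ENNReal.ofReal_ne_top).lt_top hNa2.lt_top)
  -- pointwise coercion facts
  have hcoe : ∀ z : ℂ, ENNReal.ofReal (‖z‖) = (‖z‖₊ : ℝ≥0∞) := fun z => by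
    rw [ofReal_norm, enorm_eq_nnnorm]
  have hle_a : ∀ j, ENNReal.ofReal (‖a j‖) ≤ Va j := fun j =>
    le_mul_of_one_le_left zero_le (one_le_zV hτ j)
  have hBm : ∀ m, ENNReal.ofReal (‖b m‖) ≤ Nb ^ (1/2:ℝ) := by
    intro m
    have h1 : ENNReal.ofReal (‖b m‖) ≤ B m :=
      le_mul_of_one_le_left zero_le (one_le_zW hτ hℓ0.le m)
    have h2 : B m ^ (2:ℝ) ≤ Nb := ENNReal.le_tsum m
    have h3 : B m = (B m ^ (2:ℝ)) ^ (1/2:ℝ) := by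
      rw [← ENNReal.rpow_mul]; norm_num
    exact h1.trans (h3 ▸ ENNReal.rpow_le_rpow h2 (by norm_num))
  -- summability of the convolution
  have habsum : ∀ k : ℤ, (∑' j, ENNReal.ofReal (‖a j‖) *
      ENNReal.ofReal (‖b (k - j)‖)) < ⊤ := by
    intro k
    calc ∑' j, ENNReal.ofReal (‖a j‖) * ENNReal.ofReal (‖b (k - j)‖)
        ≤ ∑' j, Va j * Nb ^ (1/2:ℝ) :=
          Summable.tsum_le_tsum (fun j => mul_le_mul' (hle_a j) (hBm _))
            ENNReal.summable ENNReal.summable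
      _ = (∑' j, Va j) * Nb ^ (1/2:ℝ) := ENNReal.tsum_mul_right
      _ < ⊤ := ENNReal.mul_lt_top hSa_fin hNb2.lt_top
  have hsummable : ∀ k : ℤ, Summable fun j : ℤ => a j * b (k - j) := by
    intro k
    apply Summable.of_nnnorm
    rw [← ENNReal.tsum_coe_ne_top_iff_summable]
    have : ∀ j : ℤ, ((‖a j * b (k - j)‖₊ : ℝ≥0∞)) =
        ENNReal.ofReal (‖a j‖) * ENNReal.ofReal (‖b (k - j)‖) := by
      intro j; rw [hcoe, hcoe, ← ENNReal.coe_mul, nnnorm_mul]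
    rw [tsum_congr this]
    exact (habsum k).ne
  refine ⟨hsummable, ?_⟩
  -- bound on the convolution coefficients
  set c : ℤ → ℂ := fun k => ∑' j, a j * b (k - j) with hc
  have hck : ∀ k, ENNReal.ofReal (‖c k‖) ≤
      ∑' j, ENNReal.ofReal (‖a j‖) * ENNReal.ofReal (‖b (k - j)‖) := by
    intro k
    have hs : Summable fun j : ℤ => ‖a j * b (k - j)‖₊ := by
      rw [← NNReal.summable_coe]
      simpa only [coe_nnnorm] using (hsummable k).norm
    calc ENNReal.ofReal (‖c k‖) = (‖c k‖₊ : ℝ≥0∞) := hcoe _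
      _ ≤ ((∑' j, ‖a j * b (k - j)‖₊ : NNReal) : ℝ≥0∞) :=
          ENNReal.coe_le_coe.2 (nnnorm_tsum_le hs)
      _ = ∑' j, ((‖a j * b (k - j)‖₊ : ℝ≥0∞)) := ENNReal.coe_tsum hs
      _ = ∑' j, ENNReal.ofReal (‖a j‖) * ENNReal.ofReal (‖b (k - j)‖) := by
          refine tsum_congr fun j => ?_
          rw [hcoe, hcoe, ← ENNReal.coe_mul, nnnorm_mul]
  -- pointwise weighted bound
  have hpoint : ∀ k, zW τ ℓ k * ENNReal.ofReal (‖c k‖) ≤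
      ENNReal.ofReal (2 ^ ℓ) *
        ((∑' j, A j * Vb (k - j)) + (∑' j, Va j * B (k - j))) := by
    intro k
    calc zW τ ℓ k * ENNReal.ofReal (‖c k‖)
        ≤ zW τ ℓ k * ∑' j, ENNReal.ofReal (‖a j‖) *
            ENNReal.ofReal (‖b (k - j)‖) := mul_le_mul' le_rfl (hck k)
      _ = ∑' j, zW τ ℓ k * (ENNReal.ofReal (‖a j‖) *
            ENNReal.ofReal (‖b (k - j)‖)) := ENNReal.tsum_mul_left.symm
      _ ≤ ∑' j, (ENNReal.ofReal (2 ^ ℓ) *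
            (zW τ ℓ j * zV τ (k - j) + zV τ j * zW τ ℓ (k - j))) *
            (ENNReal.ofReal (‖a j‖) * ENNReal.ofReal (‖b (k - j)‖)) :=
          Summable.tsum_le_tsum (fun j => mul_le_mul' (zW_bound hτ hℓ0 k j) le_rfl)
            ENNReal.summable ENNReal.summable
      _ = ∑' j, ENNReal.ofReal (2 ^ ℓ) *
            (A j * Vb (k - j) + Va j * B (k - j)) := by
          refine tsum_congr fun j => ?_
          simp only [hA, hB, hVa, hVb]
          ring
      _ = ENNReal.ofReal (2 ^ ℓ) *
          ((∑' j, A j * Vb (k - j)) + (∑' j, Va j * B (k - j))) := by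
          rw [ENNReal.tsum_mul_left, ENNReal.tsum_add]
  -- assemble
  set P : ℤ → ℝ≥0∞ := fun k => ∑' j, A j * Vb (k - j) with hP
  set Q : ℤ → ℝ≥0∞ := fun k => ∑' j, Va j * B (k - j) with hQ
  have hPcomm : ∀ k, P k = ∑' j, Vb j * A (k - j) := by
    intro k
    rw [hP]
    calc (∑' j, A j * Vb (k - j))
        = ∑' j, A (k - j) * Vb (k - (k - j)) :=
          ((Equiv.subLeft k).tsum_eq (fun j => A j * Vb (k - j))).symm
      _ = ∑' j, Vb j * A (k - j) := by
          refine tsum_congr fun j => ?_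
          rw [_root_.sub_sub_cancel, mul_comm]
  have main : (∑' k, (zW τ ℓ k * ENNReal.ofReal (‖c k‖)) ^ (2:ℝ)) ^ (1/2:ℝ) ≤
      ENNReal.ofReal (2 ^ ℓ) * (((∑' j, Vb j) * Na ^ (1/2:ℝ)) + (∑' j, Va j) * Nb ^ (1/2:ℝ)) := by
    calc (∑' k, (zW τ ℓ k * ENNReal.ofReal (‖c k‖)) ^ (2:ℝ)) ^ (1/2:ℝ)
        ≤ (∑' k, (ENNReal.ofReal (2 ^ ℓ) * (P k + Q k)) ^ (2:ℝ)) ^ (1/2:ℝ) := by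
          apply ENNReal.rpow_le_rpow _ (by norm_num)
          exact Summable.tsum_le_tsum (fun k => ENNReal.rpow_le_rpow (hpoint k) (by norm_num))
            ENNReal.summable ENNReal.summable
      _ = ENNReal.ofReal (2 ^ ℓ) * (∑' k, (P k + Q k) ^ (2:ℝ)) ^ (1/2:ℝ) := by
          have : ∀ k, (ENNReal.ofReal (2 ^ ℓ) * (P k + Q k)) ^ (2:ℝ)
              = ENNReal.ofReal (2 ^ ℓ) ^ (2:ℝ) * (P k + Q k) ^ (2:ℝ) := fun k =>
            ENNReal.mul_rpow_of_nonneg _ _ (by norm_num)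
          rw [tsum_congr this, ENNReal.tsum_mul_left,
            ENNReal.mul_rpow_of_nonneg _ _ (by norm_num : (0:ℝ) ≤ 1/2),
            ← ENNReal.rpow_mul]
          norm_num
      _ ≤ ENNReal.ofReal (2 ^ ℓ) *
          ((∑' k, P k ^ (2:ℝ)) ^ (1/2:ℝ) + (∑' k, Q k ^ (2:ℝ)) ^ (1/2:ℝ)) :=
          mul_le_mul' le_rfl (zmink P Q)
      _ ≤ ENNReal.ofReal (2 ^ ℓ) *
          (((∑' j, Vb j) * Na ^ (1/2:ℝ)) + (∑' j, Va j) * Nb ^ (1/2:ℝ)) := by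
          apply mul_le_mul' le_rfl
          apply add_le_add
          · have : (∑' k, P k ^ (2:ℝ)) = ∑' k, (∑' j, Vb j * A (k - j)) ^ (2:ℝ) := by
              exact tsum_congr fun k => by rw [hPcomm k]
            rw [this, hNa]
            exact zyoung Vb A
          · rw [hQ, hNb]
            exact zyoung Va B
  -- final constant computation
  have hCsqrt : ENNReal.ofReal (zC ℓ) ^ (1/2:ℝ) = ENNReal.ofReal (Real.sqrt (zC ℓ)) := by
    rw [ENNReal.ofReal_rpow_of_pos hzC, Real.sqrt_eq_rpow]
  calc (∑' k, (zW τ ℓ k * ENNReal.ofReal (‖c k‖)) ^ (2:ℝ)) ^ (1/2:ℝ)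
      ≤ ENNReal.ofReal (2 ^ ℓ) *
        (((∑' j, Vb j) * Na ^ (1/2:ℝ)) + (∑' j, Va j) * Nb ^ (1/2:ℝ)) := main
    _ ≤ ENNReal.ofReal (2 ^ ℓ) *
        ((ENNReal.ofReal (zC ℓ) ^ (1/2:ℝ) * Nb ^ (1/2:ℝ) * Na ^ (1/2:ℝ)) +
          ENNReal.ofReal (zC ℓ) ^ (1/2:ℝ) * Na ^ (1/2:ℝ) * Nb ^ (1/2:ℝ)) :=
        mul_le_mul' le_rfl (add_le_add (mul_le_mul' hSb le_rfl) (mul_le_mul' hSa le_rfl))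
    _ = ENNReal.ofReal (2 * 2 ^ ℓ * Real.sqrt (zC ℓ)) * Na ^ (1/2:ℝ) * Nb ^ (1/2:ℝ) := by
        rw [ENNReal.ofReal_mul (by positivity), ENNReal.ofReal_mul (by positivity),
          ← hCsqrt]
        rw [show ENNReal.ofReal (2:ℝ) = 2 by simp]
        ring
end

section
/- Suppose the family (G^ℓ)_{ℓ=1}^{K+1} is of class 𝒞 on the scale (Y_k, U_k). Define F¹ = G¹ and recursively, for ℓ = 2, …, K+1, F^ℓ = G^ℓ − Σ_{i=2}^{ℓ} (1/i!) Σ_{ℓ₁+⋯+ℓ_i = ℓ, each ℓ_m ≥ 1} D_{ℓ₁}⋯D_{ℓ_{i−1}}F^{ℓ_i}, where (D_j g)(U) := Dg(U)·F^j(U) denotes the Lie derivative of g along F^j. Then the family (F^ℓ)_{ℓ=1}^{K+1} is also of class 𝒞. -/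
namespace Stmt12

variable (Y : ℕ → Type) [∀ k, NormedAddCommGroup (Y k)] [∀ k, NormedSpace ℝ (Y k)]

/-- Transport along an equality of scale indices. -/
def ecast {a b : ℕ} (h : a = b) : Y a →L[ℝ] Y b := by
  subst h; exact ContinuousLinearMap.id ℝ (Y a)

variable (incl : ∀ j k : ℕ, j ≤ k → (Y k →L[ℝ] Y j))

/-- Iterated Lie derivative `D_{ℓ₁} ⋯ D_{ℓ_{i−1}} F^{ℓ_i}` along the coefficient
vector fields of the modified equation, represented at rung `k` of the scale.  For a
list `[ℓ₁, …, ℓ_i]` it maps `Y k` into `Y (k − (ℓ₁ + ⋯ + ℓ_i))`, where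
`(D_j g)(U) = Dg(U)·F^j(U)` is computed one rung down via the inclusions. -/
noncomputable def lieIter (F : ∀ ℓ k : ℕ, Y k → Y (k - ℓ)) :
    (L : List ℕ) → (k : ℕ) → Y k → Y (k - L.sum)
  | [], k => fun u => ecast Y (by simp) u
  | [ℓ], k => fun u => ecast Y (by simp) (F ℓ k u)
  | ℓ₁ :: ℓ₂ :: L, k => fun u =>
      ecast Y (by simp only [List.sum_cons]; omega)
        (fderiv ℝ (lieIter F (ℓ₂ :: L) (k - ℓ₁))
          (incl (k - ℓ₁) k (Nat.sub_le k ℓ₁) u) (F ℓ₁ k u))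

lemma contDiffOn_ecast_comp {E : Type} [NormedAddCommGroup E] [NormedSpace ℝ E]
    {a b : ℕ} (h : a = b) {f : E → Y a} {s : Set E} {n : WithTop ℕ∞}
    (hf : ContDiffOn ℝ n f s) : ContDiffOn ℝ n (fun u => ecast Y h (f u)) s := by
  subst h; exact hf

lemma norm_iteratedFDerivWithin_ecast_comp {E : Type} [NormedAddCommGroup E] [NormedSpace ℝ E]
    {a b : ℕ} (h : a = b) (f : E → Y a) (s : Set E) (x : E) (i : ℕ) :
    ‖iteratedFDerivWithin ℝ i (fun u => ecast Y h (f u)) s x‖ =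
      ‖iteratedFDerivWithin ℝ i f s x‖ := by subst h; rfl

lemma uniform_bound {α : Type} {s : Set α} (d : ℕ → α → ℝ) :
    ∀ j : ℕ, (∀ i ≤ j, ∃ C, ∀ u ∈ s, d i u ≤ C) →
      ∃ C, ∀ i ≤ j, ∀ u ∈ s, d i u ≤ C := by
  intro j
  induction j with
  | zero =>
    intro h
    obtain ⟨C, hC⟩ := h 0 le_rfl
    exact ⟨C, by rintro i hi u hu; interval_cases i; exact hC u hu⟩
  | succ j IH =>
    intro h
    obtain ⟨C₁, hC₁⟩ := IH fun i hi => h i (hi.trans (Nat.le_succ j))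
    obtain ⟨C₂, hC₂⟩ := h (j + 1) le_rfl
    refine ⟨max C₁ C₂, fun i hi u hu => ?_⟩
    rcases Nat.lt_succ_iff_lt_or_eq.1 (Nat.lt_succ_of_le hi) with h' | rfl
    · exact le_trans (hC₁ i (Nat.lt_succ_iff.1 h') u hu) (le_max_left _ _)
    · exact le_trans (hC₂ u hu) (le_max_right _ _)

lemma clm_norm_iteratedFDeriv_le {E F : Type} [NormedAddCommGroup E] [NormedSpace ℝ E]
    [NormedAddCommGroup F] [NormedSpace ℝ F] (φ : E →L[ℝ] F) {i : ℕ} (hi : 1 ≤ i) (x : E) :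
    ‖iteratedFDeriv ℝ i (φ : E → F) x‖ ≤ ‖φ‖ := by
  obtain ⟨m, rfl⟩ := Nat.exists_eq_add_of_le hi
  rw [add_comm 1 m, ← norm_iteratedFDeriv_fderiv]
  have hfd : fderiv ℝ (φ : E → F) = fun _ => φ := funext fun y => φ.fderiv
  rw [hfd]
  cases m with
  | zero => simp
  | succ m =>
    rw [iteratedFDeriv_const_of_ne (Nat.succ_ne_zero m)]
    simpa using norm_nonneg φ

/-- Main lemma: class-C property of iterated Lie derivatives. -/
lemma lieIter_classC (K N : ℕ)
    (hincl_norm : ∀ j k (h : j ≤ k) (u : Y k), ‖incl j k h u‖ ≤ ‖u‖)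
    (U : ∀ k, Set (Y k)) (hUopen : ∀ k, IsOpen (U k))
    (hUnested : ∀ j k (h : j ≤ k), ∀ u ∈ U k, incl j k h u ∈ U j)
    (F : ∀ ℓ k : ℕ, Y k → Y (k - ℓ)) :
    ∀ L : List ℕ, L ≠ [] →
    (∀ m ∈ L, 1 ≤ m ∧ ∀ j k : ℕ, m ≤ k → k ≤ K + 1 → j + k ≤ N →
      ContDiffOn ℝ j (F m k) (U k) ∧
      ∀ i ≤ j, ∃ C, ∀ u ∈ U k, ‖iteratedFDerivWithin ℝ i (F m k) (U k) u‖ ≤ C) →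
    ∀ j k : ℕ, L.sum ≤ k → k ≤ K + 1 → j + k ≤ N →
      ContDiffOn ℝ j (lieIter Y incl F L k) (U k) ∧
      ∀ i ≤ j, ∃ C, ∀ u ∈ U k,
        ‖iteratedFDerivWithin ℝ i (lieIter Y incl F L k) (U k) u‖ ≤ C := by
  intro L
  induction L with
  | nil => intro h; cases h rfl
  | cons hd tl IH =>
    intro _ hP j k hsum hk hjN
    cases tl with
    | nil =>
      obtain ⟨hhd1, hhd⟩ := hP hd (by simp)
      have hsum' : hd ≤ k := by simpa using hsum
      obtain ⟨hcd, hbd⟩ := hhd j k hsum' hk hjN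
      constructor
      · simp only [lieIter]
        exact contDiffOn_ecast_comp Y _ hcd
      · intro i hi
        obtain ⟨C, hC⟩ := hbd i hi
        refine ⟨C, fun u hu => ?_⟩
        simp only [lieIter]
        rw [norm_iteratedFDerivWithin_ecast_comp]
        exact hC u hu
    | cons hd2 tl2 =>
      -- notation
      set k' := k - hd with hk'
      have hhd1 : 1 ≤ hd := (hP hd (by simp)).1
      have hsum2 : hd + (hd2 :: tl2).sum ≤ k := by simpa [List.sum_cons, add_assoc] using hsum
      have hsum' : (hd2 :: tl2).sum ≤ k' := by omega
      have hk'K : k' ≤ K + 1 := by omega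
      have hjk' : (j + 1) + k' ≤ N := by omega
      obtain ⟨hf₀, hbf₀⟩ := IH (by simp) (fun m hm => hP m (by simp [hm])) (j + 1) k' hsum' hk'K hjk'
      set f₀ := lieIter Y incl F (hd2 :: tl2) k' with hf₀def
      obtain ⟨C₀, hC₀⟩ := uniform_bound _ (j + 1) hbf₀
      -- derivative of f₀ is ContDiffOn j
      have hg' : ContDiffOn ℝ j (fderiv ℝ f₀) (U k') := by
        apply hf₀.fderiv_of_isOpen (hUopen k')
        exact_mod_cast le_rfl
      have hmaps : Set.MapsTo (incl k' k (Nat.sub_le k hd)) (U k) (U k') :=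
        fun u hu => hUnested k' k (Nat.sub_le k hd) u hu
      have hg : ContDiffOn ℝ j
          (fun u : Y k => fderiv ℝ f₀ (incl k' k (Nat.sub_le k hd) u)) (U k) := by
        exact hg'.comp ((incl k' k (Nat.sub_le k hd)).contDiff.contDiffOn) hmaps
      -- F hd at rung k
      have hhdk : hd ≤ k := le_trans (Nat.le_add_right _ _) hsum2
      obtain ⟨hFc, hFb⟩ := (hP hd (by simp)).2 j k hhdk hk hjN
      obtain ⟨CF, hCF⟩ := uniform_bound _ j hFb
      -- bound for derivatives of (fderiv f₀) within U k' at points incl u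
      have hDbound : ∀ i ≤ j, ∀ y ∈ U k',
          ‖iteratedFDerivWithin ℝ i (fderiv ℝ f₀) (U k') y‖ ≤ C₀ := by
        intro i hi y hy
        have heq : Set.EqOn (fderiv ℝ f₀) (fderivWithin ℝ f₀ (U k')) (U k') :=
          fun z hz => (fderivWithin_of_isOpen (hUopen k') hz).symm
        rw [iteratedFDerivWithin_congr heq hy,
          norm_iteratedFDerivWithin_fderivWithin ((hUopen k').uniqueDiffOn) hy]
        exact hC₀ (i + 1) (by omega) y hy
      -- incl has derivatives bounded by 1
      have hinclnorm : ‖incl k' k (Nat.sub_le k hd)‖ ≤ 1 :=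
        ContinuousLinearMap.opNorm_le_bound _ zero_le_one
          (fun u => by simpa using hincl_norm k' k (Nat.sub_le k hd) u)
      have hIbound : ∀ i, 1 ≤ i → ∀ u ∈ U k,
          ‖iteratedFDerivWithin ℝ i (incl k' k (Nat.sub_le k hd) : Y k → Y k') (U k) u‖
            ≤ 1 := by
        intro i hi u hu
        rw [iteratedFDerivWithin_of_isOpen i (hUopen k) hu]
        exact le_trans (clm_norm_iteratedFDeriv_le _ hi u) hinclnorm
      -- bound for iterated derivatives of g on U k
      have hgbound : ∀ i ≤ j, ∀ u ∈ U k,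
          ‖iteratedFDerivWithin ℝ i
            (fun u : Y k => fderiv ℝ f₀ (incl k' k (Nat.sub_le k hd) u)) (U k) u‖
            ≤ (j.factorial : ℝ) * max C₀ 0 := by
        intro i hi u hu
        have hcomp := norm_iteratedFDerivWithin_comp_le (𝕜 := ℝ)
          (g := fderiv ℝ f₀) (f := (incl k' k (Nat.sub_le k hd) : Y k → Y k'))
          (n := i) (N := (j : WithTop ℕ∞))
          hg' ((incl k' k (Nat.sub_le k hd)).contDiff.contDiffOn)
          (by exact_mod_cast hi)
          ((hUopen k').uniqueDiffOn) ((hUopen k).uniqueDiffOn) hmaps hu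
          (C := max C₀ 0) (D := 1)
          (fun i' hi' => le_trans (hDbound i' (le_trans hi' hi) _ (hmaps hu)) (le_max_left _ _))
          (fun i' hi'1 _ => by rw [one_pow]; exact hIbound i' hi'1 u hu)
        have hfin : (i.factorial : ℝ) * max C₀ 0 * 1 ^ i ≤ (j.factorial : ℝ) * max C₀ 0 := by
          rw [one_pow, mul_one]
          have hle : (i.factorial : ℝ) ≤ (j.factorial : ℝ) := by
            exact_mod_cast Nat.factorial_le hi
          exact mul_le_mul_of_nonneg_right hle (le_max_right _ _)
        exact le_trans hcomp hfin
      -- the bilinear application map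
      set B : (Y k' →L[ℝ] Y (k' - (hd2 :: tl2).sum)) →L[ℝ] Y k' →L[ℝ] Y (k' - (hd2 :: tl2).sum) :=
        (ContinuousLinearMap.apply ℝ (Y (k' - (hd2 :: tl2).sum))).flip with hB
      have hBapp : ∀ (φ : Y k' →L[ℝ] Y (k' - (hd2 :: tl2).sum)) (v : Y k'), B φ v = φ v :=
        fun φ v => rfl
      have hBnorm : ‖B‖ ≤ 1 := by
        rw [hB, ContinuousLinearMap.opNorm_flip, ContinuousLinearMap.apply,
          ContinuousLinearMap.opNorm_flip]
        exact ContinuousLinearMap.norm_id_le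
      -- the inner function as a bilinear application
      have hinner : ContDiffOn ℝ j (fun u : Y k =>
          fderiv ℝ f₀ (incl k' k (Nat.sub_le k hd) u) (F hd k u)) (U k) := by
        have := (B.isBoundedBilinearMap.contDiff (n := (j : WithTop ℕ∞))).comp_contDiffOn
          (hg.prodMk hFc)
        exact this
      constructor
      · simp only [lieIter]
        exact contDiffOn_ecast_comp Y _ hinner
      · intro i hi
        refine ⟨∑ i' ∈ Finset.range (i + 1),
          (i.choose i' : ℝ) * ((j.factorial : ℝ) * max C₀ 0) * max CF 0, fun u hu => ?_⟩
        simp only [lieIter]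
        rw [norm_iteratedFDerivWithin_ecast_comp]
        have hbil := B.norm_iteratedFDerivWithin_le_of_bilinear_of_le_one
          (f := fun u : Y k => fderiv ℝ f₀ (incl k' k (Nat.sub_le k hd) u))
          (g := F hd k) hg hFc ((hUopen k).uniqueDiffOn) hu
          (n := i) (by exact_mod_cast hi) hBnorm
        refine le_trans hbil (Finset.sum_le_sum fun i' hi' => ?_)
        have hi'j : i' ≤ j := le_trans (Nat.lt_succ_iff.1 (Finset.mem_range.1 hi')) hi
        have hii'j : i - i' ≤ j := le_trans (Nat.sub_le _ _) hi
        have h1 := hgbound i' hi'j u hu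
        have h2 : ‖iteratedFDerivWithin ℝ (i - i') (F hd k) (U k) u‖ ≤ max CF 0 :=
          le_trans (hCF (i - i') hii'j u hu) (le_max_left _ _)
        have hn1 : (0:ℝ) ≤ ‖iteratedFDerivWithin ℝ i'
            (fun u : Y k => fderiv ℝ f₀ (incl k' k (Nat.sub_le k hd) u)) (U k) u‖ :=
          norm_nonneg _
        exact mul_le_mul (mul_le_mul_of_nonneg_left h1 (by positivity)) h2 (norm_nonneg _)
          (by positivity)

lemma block_lt {ℓ : ℕ} (c : Composition ℓ) (hc : 2 ≤ c.length) {m : ℕ}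
    (hm : m ∈ c.blocks) : m < ℓ := by
  have hperm : List.Perm c.blocks (m :: c.blocks.erase m) := List.perm_cons_erase hm
  have h1 : c.blocks.sum = m + (c.blocks.erase m).sum := by
    rw [hperm.sum_eq]; simp
  have hlen : (c.blocks.erase m).length = c.length - 1 := by
    rw [List.length_erase_of_mem hm, c.blocks_length]
  have hpos : (c.blocks.erase m).length • 1 ≤ (c.blocks.erase m).sum :=
    List.card_nsmul_le_sum _ 1 fun x hx => c.one_le_blocks (List.mem_of_mem_erase hx)
  have hsum : c.blocks.sum = ℓ := c.blocks_sum
  simp only [smul_eq_mul, mul_one] at hpos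
  omega

/-- A family `H^ℓ`, `1 ≤ ℓ ≤ T`, represented on the scale by maps
`H ℓ k : Y k → Y (k − ℓ)`, is of class `𝒞` if for all `ℓ ≤ k ≤ T` and `j + k ≤ N` the
representative at rung `k` is `j` times continuously differentiable on `U k` as a map
into `Y (k − ℓ)`, with bounded derivatives. -/
def IsClassC (N T : ℕ) (U : ∀ k, Set (Y k)) (H : ∀ ℓ k : ℕ, Y k → Y (k - ℓ)) : Prop :=
  ∀ ℓ j k : ℕ, 1 ≤ ℓ → ℓ ≤ k → k ≤ T → j + k ≤ N →
    ContDiffOn ℝ j (H ℓ k) (U k) ∧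
    ∀ i : ℕ, i ≤ j → ∃ C : ℝ, ∀ u ∈ U k,
      ‖iteratedFDerivWithin ℝ i (H ℓ k) (U k) u‖ ≤ C

/-- On a scale of Banach spaces `Y₀ ⊇ Y₁ ⊇ ⋯ ⊇ Y_{K+1}` (inclusions `incl`, injective
and norm-nonincreasing) with nested open sets `U_k ⊆ Y_k`, if the family
`(G^ℓ)_{ℓ=1}^{K+1}` is of class `𝒞` and `(F^ℓ)` is obtained from it by the
modified-vector-field recursion `F¹ = G¹`,
`F^ℓ = G^ℓ − Σ_{i=2}^{ℓ} (1/i!) Σ_{ℓ₁+⋯+ℓ_i=ℓ} D_{ℓ₁}⋯D_{ℓ_{i−1}}F^{ℓ_i}`,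
then `(F^ℓ)_{ℓ=1}^{K+1}` is also of class `𝒞`. -/
theorem stmt12 (K N : ℕ) (hKN : K + 1 ≤ N)
    (hincl_refl : ∀ k (u : Y k), incl k k le_rfl u = u)
    (hincl_comp : ∀ i j k (hij : i ≤ j) (hjk : j ≤ k) (u : Y k),
      incl i j hij (incl j k hjk u) = incl i k (hij.trans hjk) u)
    (hincl_inj : ∀ j k (h : j ≤ k), Function.Injective (incl j k h))
    (hincl_norm : ∀ j k (h : j ≤ k) (u : Y k), ‖incl j k h u‖ ≤ ‖u‖)
    (U : ∀ k, Set (Y k)) (hUopen : ∀ k, IsOpen (U k))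
    (hUnested : ∀ j k (h : j ≤ k), ∀ u ∈ U k, incl j k h u ∈ U j)
    (G F : ∀ ℓ k : ℕ, Y k → Y (k - ℓ))
    (hGcompat : ∀ ℓ j k (h : j ≤ k), k ≤ K + 1 → ∀ u : Y k,
      G ℓ j (incl j k h u) = incl (j - ℓ) (k - ℓ) (Nat.sub_le_sub_right h ℓ) (G ℓ k u))
    (hFcompat : ∀ ℓ j k (h : j ≤ k), k ≤ K + 1 → ∀ u : Y k,
      F ℓ j (incl j k h u) = incl (j - ℓ) (k - ℓ) (Nat.sub_le_sub_right h ℓ) (F ℓ k u))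
    (hGclass : IsClassC Y N (K + 1) U G)
    (hF1 : ∀ k, k ≤ K + 1 → ∀ u ∈ U k, F 1 k u = G 1 k u)
    (hFrec : ∀ ℓ k : ℕ, 2 ≤ ℓ → ℓ ≤ k → k ≤ K + 1 → ∀ u ∈ U k,
      F ℓ k u = G ℓ k u - ∑ c : Composition ℓ,
        if 2 ≤ c.length then
          ((c.length.factorial : ℝ))⁻¹ •
            ecast Y (by rw [c.blocks_sum]) (lieIter Y incl F c.blocks k u)
        else 0) :
    IsClassC Y N (K + 1) U F := by
  have main : ∀ ℓ : ℕ, 1 ≤ ℓ → ∀ j k : ℕ, ℓ ≤ k → k ≤ K + 1 → j + k ≤ N →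
      ContDiffOn ℝ j (F ℓ k) (U k) ∧
      ∀ i ≤ j, ∃ C, ∀ u ∈ U k, ‖iteratedFDerivWithin ℝ i (F ℓ k) (U k) u‖ ≤ C := by
    intro ℓ
    induction ℓ using Nat.strong_induction_on with
    | _ ℓ IH =>
      intro hℓ j k hlk hk hjN
      rcases eq_or_lt_of_le hℓ with h1 | h2
      · -- ℓ = 1
        obtain rfl := h1.symm
        have hEq : Set.EqOn (F 1 k) (G 1 k) (U k) := fun u hu => hF1 k hk u hu
        obtain ⟨hGc, hGb⟩ := hGclass 1 j k le_rfl hlk hk hjN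
        refine ⟨hGc.congr hEq, fun i hi => ?_⟩
        obtain ⟨C, hC⟩ := hGb i hi
        refine ⟨C, fun u hu => ?_⟩
        rw [iteratedFDerivWithin_congr hEq hu]
        exact hC u hu
      · -- 2 ≤ ℓ
        have hℓ2 : 2 ≤ ℓ := h2
        set ψ : Composition ℓ → Y k → Y (k - ℓ) := fun c u =>
          if 2 ≤ c.length then
            ((c.length.factorial : ℝ))⁻¹ •
              ecast Y (by rw [c.blocks_sum]) (lieIter Y incl F c.blocks k u)
          else 0 with hψ
        have hEq : Set.EqOn (F ℓ k)
            (fun u => G ℓ k u - ∑ c : Composition ℓ, ψ c u) (U k) :=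
          fun u hu => hFrec ℓ k hℓ2 hlk hk u hu
        have hψc : ∀ c : Composition ℓ, ContDiffOn ℝ j (ψ c) (U k) ∧
            ∀ i ≤ j, ∃ C, ∀ u ∈ U k,
              ‖iteratedFDerivWithin ℝ i (ψ c) (U k) u‖ ≤ C := by
          intro c
          by_cases hc : 2 ≤ c.length
          · have hne : c.blocks ≠ [] := by
              have hbl := c.blocks_length
              intro h; rw [h] at hbl; simp at hbl; omega
            have hmem : ∀ m ∈ c.blocks, 1 ≤ m ∧ ∀ j' k' : ℕ, m ≤ k' → k' ≤ K + 1 →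
                j' + k' ≤ N → ContDiffOn ℝ j' (F m k') (U k') ∧
                ∀ i ≤ j', ∃ C, ∀ u ∈ U k',
                  ‖iteratedFDerivWithin ℝ i (F m k') (U k') u‖ ≤ C := by
              intro m hm
              exact ⟨c.one_le_blocks hm,
                fun j' k' h1' h2' h3' =>
                  IH m (block_lt c hc hm) (c.one_le_blocks hm) j' k' h1' h2' h3'⟩
            have hsum : c.blocks.sum ≤ k := by rw [c.blocks_sum]; exact hlk
            obtain ⟨hLc, hLb⟩ := lieIter_classC Y incl K N hincl_norm U hUopen hUnested F
              c.blocks hne hmem j k hsum hk hjN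
            have hψeq : ψ c = fun u => ((c.length.factorial : ℝ))⁻¹ •
                ecast Y (by rw [c.blocks_sum]) (lieIter Y incl F c.blocks k u) := by
              funext u; simp only [hψ, if_pos hc]
            constructor
            · rw [hψeq]
              exact ContDiffOn.const_smul _ (contDiffOn_ecast_comp Y _ hLc)
            · intro i hi
              have hij' : (i : WithTop ℕ∞) ≤ (j : WithTop ℕ∞) := by exact_mod_cast hi
              obtain ⟨C, hC⟩ := hLb i hi
              refine ⟨((c.length.factorial : ℝ))⁻¹ * C, fun u hu => ?_⟩
              rw [hψeq]
              have hsm := iteratedFDerivWithin_const_smul_apply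
                (f := fun u => ecast Y (by rw [c.blocks_sum] :
                    k - c.blocks.sum = k - ℓ) (lieIter Y incl F c.blocks k u))
                (a := ((c.length.factorial : ℝ))⁻¹)
                ((contDiffOn_ecast_comp Y _ hLc).of_le hij' u hu)
                ((hUopen k).uniqueDiffOn) hu
              have : (fun u => ((c.length.factorial : ℝ))⁻¹ •
                  ecast Y (by rw [c.blocks_sum] : k - c.blocks.sum = k - ℓ)
                    (lieIter Y incl F c.blocks k u)) =
                  ((c.length.factorial : ℝ))⁻¹ •
                  (fun u => ecast Y (by rw [c.blocks_sum] : k - c.blocks.sum = k - ℓ)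
                    (lieIter Y incl F c.blocks k u)) := rfl
              rw [this, hsm]
              have h0 : (0:ℝ) ≤ ((c.length.factorial : ℝ))⁻¹ := by positivity
              refine le_trans (norm_smul_le ((c.length.factorial : ℝ))⁻¹
                (iteratedFDerivWithin ℝ i
                  (fun u => ecast Y (by rw [c.blocks_sum] : k - c.blocks.sum = k - ℓ)
                    (lieIter Y incl F c.blocks k u)) (U k) u)) ?_
              rw [Real.norm_eq_abs, abs_of_nonneg h0]
              refine mul_le_mul_of_nonneg_left ?_ h0
              rw [norm_iteratedFDerivWithin_ecast_comp]
              exact hC u hu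
          · have hψeq : ψ c = fun _ => (0 : Y (k - ℓ)) := by
              funext u; simp only [hψ, if_neg hc]
            rw [hψeq]
            refine ⟨contDiffOn_const, fun i _ => ⟨0, fun u hu => ?_⟩⟩
            rw [iteratedFDerivWithin_zero_fun]
            simp
        obtain ⟨hGc, hGb⟩ := hGclass ℓ j k hℓ hlk hk hjN
        have hSc : ContDiffOn ℝ j (fun u => ∑ c : Composition ℓ, ψ c u) (U k) :=
          ContDiffOn.sum fun c _ => (hψc c).1
        refine ⟨(hGc.sub hSc).congr hEq, fun i hi => ?_⟩
        obtain ⟨CG, hCG⟩ := hGb i hi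
        choose Cc hCc using fun c => (hψc c).2 i hi
        refine ⟨CG + ∑ c : Composition ℓ, Cc c, fun u hu => ?_⟩
        have hij' : (i : WithTop ℕ∞) ≤ (j : WithTop ℕ∞) := by exact_mod_cast hi
        rw [iteratedFDerivWithin_congr hEq hu]
        have hGi : ContDiffOn ℝ i (G ℓ k) (U k) := hGc.of_le hij'
        have hSi : ContDiffOn ℝ i (fun u => ∑ c : Composition ℓ, ψ c u) (U k) :=
          hSc.of_le hij'
        have h1 : (fun u => G ℓ k u - ∑ c : Composition ℓ, ψ c u) =
            fun u => G ℓ k u + -∑ c : Composition ℓ, ψ c u := by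
          funext v; rw [sub_eq_add_neg]
        have hadd := iteratedFDerivWithin_add_apply' (hGi u hu) (hSi.neg u hu)
          ((hUopen k).uniqueDiffOn) hu
        have hneg' : (fun x : Y k => -∑ c : Composition ℓ, ψ c x) =
            -(fun x : Y k => ∑ c : Composition ℓ, ψ c x) := rfl
        have hnegD := iteratedFDerivWithin_neg_apply (𝕜 := ℝ)
          (f := fun u : Y k => ∑ c : Composition ℓ, ψ c u) (i := i)
          ((hUopen k).uniqueDiffOn) hu
        rw [h1, hadd, hneg', hnegD]
        have hsumD := iteratedFDerivWithin_sum_apply (f := ψ) (u := Finset.univ)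
          (i := i) ((hUopen k).uniqueDiffOn) hu
          (fun c _ => (hψc c).1.of_le hij' u hu)
        refine le_trans (norm_add_le _ _) (add_le_add (hCG u hu) ?_)
        rw [norm_neg, show (fun u => ∑ c : Composition ℓ, ψ c u) = ∑ c : Composition ℓ, ψ c from by
          funext v; simp [Finset.sum_apply], hsumD]
        refine le_trans (norm_sum_le _ _) (Finset.sum_le_sum fun c _ => ?_)
        exact hCc c u hu
  intro ℓ j k h1 h2 h3 h4
  exact main ℓ h1 j k h2 h3 h4


end Stmt12
end

section
/- Let Y be a real Hilbert space, e₀ ∈ Y a unit vector, and R > 0. For u ∈ Y write u₀ = ⟨u, e₀⟩ and u⊥ = u − u₀·e₀. Define the cones C₋ = {u ∈ Y : u₀ ≤ 0 and ‖u⊥‖ ≤ −u₀} and C₊ = {u ∈ Y : u₀ ≥ 0 and ‖u⊥‖ ≤ u₀}, and set D = {u ∈ Y : ‖u‖ < R} \ C₋. Then D is star-shaped with respect to every u ∈ C₊ with 0 < ‖u‖ < R; that is, for every such u and every w ∈ D, the whole segment {t·u + (1−t)·w : t ∈ [0,1]} is contained in D. -/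
open scoped RealInnerProductSpace

/-- Star-shapedness of the punctured ball domain for the nonlocal NLS: with `e₀` a unit
vector, `u₀ = ⟨u, e₀⟩`, `u⊥ = u − u₀e₀`, cones `C₋ = {u₀ ≤ 0, ‖u⊥‖ ≤ −u₀}` and
`C₊ = {u₀ ≥ 0, ‖u⊥‖ ≤ u₀}`, the set `D = B_R(0) \ C₋` is star-shaped with respect to
every `u ∈ C₊` with `0 < ‖u‖ < R`. -/
theorem stmt14 {Y : Type*} [NormedAddCommGroup Y] [InnerProductSpace ℝ Y]
    (e₀ : Y) (he₀ : ‖e₀‖ = 1) (R : ℝ) (hR : 0 < R)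
    (u : Y) (hu₀ : 0 ≤ ⟪u, e₀⟫) (huC : ‖u - ⟪u, e₀⟫ • e₀‖ ≤ ⟪u, e₀⟫)
    (hu0 : 0 < ‖u‖) (huR : ‖u‖ < R)
    (w : Y) (hwR : ‖w‖ < R)
    (hw : ¬(⟪w, e₀⟫ ≤ 0 ∧ ‖w - ⟪w, e₀⟫ • e₀‖ ≤ -⟪w, e₀⟫)) :
    ∀ t ∈ Set.Icc (0 : ℝ) 1,
      ‖t • u + (1 - t) • w‖ < R ∧
      ¬(⟪t • u + (1 - t) • w, e₀⟫ ≤ 0 ∧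
        ‖(t • u + (1 - t) • w) - ⟪t • u + (1 - t) • w, e₀⟫ • e₀‖ ≤
          -⟪t • u + (1 - t) • w, e₀⟫) := by
  rintro t ⟨ht0, ht1⟩
  have h1t : (0:ℝ) ≤ 1 - t := by linarith
  set u₀ := ⟪u, e₀⟫ with hu₀def
  set w₀ := ⟪w, e₀⟫ with hw₀def
  have hv₀ : ⟪t • u + (1 - t) • w, e₀⟫ = t * u₀ + (1 - t) * w₀ := by
    simp [inner_add_left, real_inner_smul_left]
    rfl
  have hperp : (t • u + (1 - t) • w) - (t * u₀ + (1 - t) * w₀) • e₀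
      = t • (u - u₀ • e₀) + (1 - t) • (w - w₀ • e₀) := by
    simp only [smul_sub, add_smul, smul_smul]
    abel
  constructor
  · have hle : ‖t • u + (1 - t) • w‖ ≤ t * ‖u‖ + (1 - t) * ‖w‖ := by
      refine (norm_add_le _ _).trans ?_
      simp [norm_smul, abs_of_nonneg ht0, abs_of_nonneg h1t]
    rcases eq_or_lt_of_le ht0 with h0 | h0
    · subst h0
      simpa using hwR
    · nlinarith [mul_le_mul_of_nonneg_left hwR.le h1t]
  · rintro ⟨hv₀le, hvperp⟩
    rw [hv₀] at hv₀le
    rw [hv₀, hperp] at hvperp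
    rcases eq_or_lt_of_le ht1 with h1 | h1
    · subst h1
      have hu₀0 : u₀ = 0 := le_antisymm (by linarith) hu₀
      have hz : u = 0 := by
        have : ‖u - u₀ • e₀‖ ≤ 0 := by linarith
        have h := norm_le_zero_iff.mp this
        rw [hu₀0] at h
        simpa using h
      rw [hz] at hu0
      simp at hu0
    · have h1t' : (0:ℝ) < 1 - t := by linarith
      have hw₀le : w₀ ≤ 0 := by nlinarith [mul_nonneg ht0 hu₀]
      have key : (1 - t) * ‖w - w₀ • e₀‖ ≤ (1 - t) * (-w₀) := by
        have e1 : (1 - t) • (w - w₀ • e₀)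
            = (t • (u - u₀ • e₀) + (1 - t) • (w - w₀ • e₀)) - t • (u - u₀ • e₀) := by
          abel
        have e2 := norm_sub_le (t • (u - u₀ • e₀) + (1 - t) • (w - w₀ • e₀))
          (t • (u - u₀ • e₀))
        rw [← e1] at e2
        have e3 : ‖t • (u - u₀ • e₀)‖ = t * ‖u - u₀ • e₀‖ := by
          simp [norm_smul, abs_of_nonneg ht0]
        have e4 : ‖(1 - t) • (w - w₀ • e₀)‖ = (1 - t) * ‖w - w₀ • e₀‖ := by
          simp [norm_smul, abs_of_nonneg h1t]
        nlinarith [mul_le_mul_of_nonneg_left huC ht0]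
      exact hw ⟨hw₀le, le_of_mul_le_mul_left (by linarith) h1t'⟩
end
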